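/- arXiv:math/0110108 — 7 statements merged into one kernel-verified Lean document; each statement's English description precedes it below -/
import Mathlib

section
/- Let n ≥ 1 and let g : ℝ^n → ℝ be monotone and additively homogeneous. If p ∈ ℝ^n is such that the set {p·x − g(x) : x ∈ ℝ^n} is bounded above (i.e. p lies in the domain of the Fenchel transform g*(p) = sup_x (p·x − g(x))), then p is a stochastic vector: p_i ≥ 0 for all i and ∑_i p_i = 1. -/
open Matrix Filter

/-- `f` is additively homogeneous: `f (c·1 + x) = c·1 + f x`. -/
def AddHomog {n : ℕ} (f : (Fin n → ℝ) → (Fin n → ℝ)) : Prop :=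
  ∀ (c : ℝ) (x : Fin n → ℝ), f (fun i => c + x i) = fun i => c + f x i

/-- A map between coordinate spaces is convex if each coordinate function is convex. -/
def IsConvexMap {n m : ℕ} (f : (Fin n → ℝ) → (Fin m → ℝ)) : Prop :=
  ∀ i, ConvexOn ℝ Set.univ (fun x => f x i)

/-- Subdifferential of a convex map `f : ℝ^n → ℝ^m` at `v`: matrices `P` with
`f x - f v ≥ P (x - v)` componentwise. -/
def Subdiff {n m : ℕ} (f : (Fin n → ℝ) → (Fin m → ℝ)) (v : Fin n → ℝ) :
    Set (Matrix (Fin m) (Fin n) ℝ) :=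
  {P | ∀ x i, P.mulVec (x - v) i ≤ f x i - f v i}

/-- `p` is a stochastic vector. -/
def IsStochVec {n : ℕ} (p : Fin n → ℝ) : Prop := (∀ i, 0 ≤ p i) ∧ ∑ i, p i = 1

/-- `P` is a row-stochastic matrix. -/
def IsStochMat {n : ℕ} (P : Matrix (Fin n) (Fin n) ℝ) : Prop := ∀ i, IsStochVec (P i)

/-- `i` has access to `j` in the graph of the nonnegative matrix `P`
(arcs `i → j` when `P i j ≠ 0`). -/
def MatAccess {n : ℕ} (P : Matrix (Fin n) (Fin n) ℝ) : Fin n → Fin n → Prop :=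
  Relation.ReflTransGen (fun i j => P i j ≠ 0)

/-- `C` is a class of `P`: an equivalence class of mutual access. -/
def IsClass {n : ℕ} (P : Matrix (Fin n) (Fin n) ℝ) (C : Set (Fin n)) : Prop :=
  ∃ i, C = {j | MatAccess P i j ∧ MatAccess P j i}

/-- `C` is a final class of `P`: a class with no access out of itself. -/
def IsFinalClass {n : ℕ} (P : Matrix (Fin n) (Fin n) ℝ) (C : Set (Fin n)) : Prop :=
  IsClass P C ∧ ∀ i ∈ C, ∀ j, MatAccess P i j → j ∈ C

/-- `N^f(P)`: the union of the final classes of `P`. -/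
def finalNodes {n : ℕ} (P : Matrix (Fin n) (Fin n) ℝ) : Set (Fin n) :=
  {i | ∃ C, IsFinalClass P C ∧ i ∈ C}

/-- Final graph `G^f(P)`: union of graphs of `P_{FF}` over final classes `F`. -/
def finalGraph {n : ℕ} (P : Matrix (Fin n) (Fin n) ℝ) : Fin n → Fin n → Prop :=
  fun i j => ∃ C, IsFinalClass P C ∧ i ∈ C ∧ j ∈ C ∧ P i j ≠ 0

/-- `N^f(PP)` for a set of matrices. -/
def finalNodesSet {n : ℕ} (PP : Set (Matrix (Fin n) (Fin n) ℝ)) : Set (Fin n) :=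
  {i | ∃ P ∈ PP, i ∈ finalNodes P}

/-- `𝒞^f(PP)`: final classes of matrices in `PP`. -/
def finalClassesSet {n : ℕ} (PP : Set (Matrix (Fin n) (Fin n) ℝ)) : Set (Set (Fin n)) :=
  {C | ∃ P ∈ PP, IsFinalClass P C}

/-- `𝒢^f(PP)`: union of final graphs of matrices in `PP`. -/
def finalGraphSet {n : ℕ} (PP : Set (Matrix (Fin n) (Fin n) ℝ)) : Fin n → Fin n → Prop :=
  fun i j => ∃ P ∈ PP, finalGraph P i j

/-- Access in a directed graph given as a relation. -/
def GAccess {n : ℕ} (G : Fin n → Fin n → Prop) : Fin n → Fin n → Prop :=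
  Relation.ReflTransGen G

/-- `C` is a (nontrivial) class of the graph `G`: an equivalence class of mutual
access containing at least one arc (i.e. the node set of a strongly connected component
of the graph `G`). -/
def IsGraphClass {n : ℕ} (G : Fin n → Fin n → Prop) (C : Set (Fin n)) : Prop :=
  (∃ i, C = {j | GAccess G i j ∧ GAccess G j i}) ∧ ∃ i ∈ C, ∃ j ∈ C, G i j

/-- `G^k`: arcs are directed paths of length `k` in `G`. -/
def GraphPow {n : ℕ} (G : Fin n → Fin n → Prop) (k : ℕ) : Fin n → Fin n → Prop :=
  fun i j => ∃ c : ℕ → Fin n, c 0 = i ∧ c k = j ∧ ∀ t < k, G (c t) (c (t + 1))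

/-- There is a circuit of length `ℓ ≥ 1` of `G` with all nodes in `C`. -/
def HasCircuitIn {n : ℕ} (G : Fin n → Fin n → Prop) (C : Set (Fin n)) (ℓ : ℕ) : Prop :=
  0 < ℓ ∧ ∃ c : ℕ → Fin n, c 0 = c ℓ ∧ (∀ t ≤ ℓ, c t ∈ C) ∧ ∀ t < ℓ, G (c t) (c (t + 1))

/-- gcd of a set of natural numbers. -/
noncomputable def SetGcd (S : Set ℕ) : ℕ :=
  sInf {d | (∀ s ∈ S, d ∣ s) ∧ ∀ e, (∀ s ∈ S, e ∣ s) → e ∣ d}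

/-- lcm of a set of natural numbers. -/
noncomputable def SetLcm (S : Set ℕ) : ℕ :=
  sInf {m | (∀ s ∈ S, s ∣ m) ∧ ∀ e, (∀ s ∈ S, s ∣ e) → m ∣ e}

/-- Cyclicity of a graph: lcm over the strongly connected components of the
gcd of the lengths of their circuits. -/
noncomputable def GraphCyclicity {n : ℕ} (G : Fin n → Fin n → Prop) : ℕ :=
  SetLcm {d | ∃ C, IsGraphClass G C ∧ d = SetGcd {ℓ | HasCircuitIn G C ℓ}}

/-- The (additive) eigenspace of `f` for eigenvalue `lam`. -/
def Eigenspace {n : ℕ} (f : (Fin n → ℝ) → (Fin n → ℝ)) (lam : ℝ) : Set (Fin n → ℝ) :=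
  {x | f x = fun i => lam + x i}

/-- Restriction of a vector to the coordinates in `C`. -/
def restrictTo {n : ℕ} (C : Set (Fin n)) (x : Fin n → ℝ) : C → ℝ := fun i => x i

/-- the domain of the Fenchel transform of a monotone additively
homogeneous map consists of stochastic vectors. -/
theorem stmt0 (n : ℕ) (hn : 1 ≤ n) (g : (Fin n → ℝ) → ℝ)
    (hmon : Monotone g)
    (hhom : ∀ (c : ℝ) (x : Fin n → ℝ), g (fun i => c + x i) = c + g x)
    (p : Fin n → ℝ)
    (hdom : BddAbove (Set.range fun x : Fin n → ℝ => (∑ i, p i * x i) - g x)) :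
    (∀ i, 0 ≤ p i) ∧ ∑ i, p i = 1 := by
  obtain ⟨M, hM⟩ := hdom
  have hM' : ∀ x : Fin n → ℝ, (∑ i, p i * x i) - g x ≤ M := fun x =>
    hM (Set.mem_range_self x)
  have hg0 : ∀ c : ℝ, g (fun _ => c) = c + g 0 := by
    intro c
    have := hhom c 0
    simpa using this
  -- key bound for constant vectors
  have h1 : ∀ c : ℝ, c * (∑ i, p i - 1) ≤ M + g 0 := by
    intro c
    have hx := hM' (fun _ => c)
    rw [hg0 c] at hx
    have hs : ∑ i, p i * c = (∑ i, p i) * c := by rw [Finset.sum_mul]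
    rw [hs] at hx
    nlinarith [hx]
  have h0 : (0:ℝ) ≤ M + g 0 := by simpa using h1 0
  -- key bound for negative unit directions
  have h2 : ∀ (i : Fin n) (t : ℝ), 0 ≤ t → -(t * p i) ≤ M + g 0 := by
    intro i t ht
    set x : Fin n → ℝ := fun j => if j = i then -t else 0 with hxdef
    have hxle : x ≤ 0 := by
      intro j
      simp only [hxdef, Pi.zero_apply]
      split
      · linarith
      · exact le_refl 0
    have hgx : g x ≤ g 0 := hmon hxle
    have hs : ∑ j, p j * x j = p i * (-t) := by
      simp [hxdef, mul_ite]
    have := hM' x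
    rw [hs] at this
    nlinarith
  constructor
  · intro i
    by_contra h
    push_neg at h
    have hpi : (0:ℝ) < -p i := by linarith
    set t : ℝ := (M + g 0 + 1) / (-p i) with htdef
    have ht : 0 ≤ t := by positivity
    have := h2 i t ht
    have heq : -(t * p i) = M + g 0 + 1 := by
      have hr : -(t * p i) = t * (-p i) := by ring
      rw [hr, htdef, div_mul_cancel₀ _ (ne_of_gt hpi)]
    linarith
  · by_contra h
    have ha : (∑ i, p i - 1) ≠ 0 := sub_ne_zero.mpr h
    have := h1 ((M + g 0 + 1) / (∑ i, p i - 1))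
    rw [div_mul_cancel₀ _ ha] at this
    linarith
end

section
/- Let n ≥ 1 and let g : ℝ^n → ℝ be monotone, additively homogeneous, and convex. Then for every v ∈ ℝ^n the subdifferential ∂g(v) = {p ∈ ℝ^n : g(x) − g(v) ≥ p·(x − v) for all x ∈ ℝ^n} is a nonempty, compact, convex set, and every p ∈ ∂g(v) is a stochastic vector. -/
open Matrix Filter

/-- the subdifferential of a convex monotone additively homogeneous
scalar map is a nonempty compact convex set of stochastic vectors. -/
theorem stmt1 (n : ℕ) (hn : 1 ≤ n) (g : (Fin n → ℝ) → ℝ)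
    (hmon : Monotone g)
    (hhom : ∀ (c : ℝ) (x : Fin n → ℝ), g (fun i => c + x i) = c + g x)
    (hconv : ConvexOn ℝ Set.univ g) (v : Fin n → ℝ) :
    {p : Fin n → ℝ | ∀ x, ∑ i, p i * (x i - v i) ≤ g x - g v}.Nonempty ∧
    IsCompact {p : Fin n → ℝ | ∀ x, ∑ i, p i * (x i - v i) ≤ g x - g v} ∧
    Convex ℝ {p : Fin n → ℝ | ∀ x, ∑ i, p i * (x i - v i) ≤ g x - g v} ∧
    ∀ p ∈ {p : Fin n → ℝ | ∀ x, ∑ i, p i * (x i - v i) ≤ g x - g v},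
      (∀ i, 0 ≤ p i) ∧ ∑ i, p i = 1 := by
  classical
  set S := {p : Fin n → ℝ | ∀ x, ∑ i, p i * (x i - v i) ≤ g x - g v} with hSdef
  -- every element is stochastic
  have hstoch : ∀ p ∈ S, (∀ i, 0 ≤ p i) ∧ ∑ i, p i = 1 := by
    intro p hp
    have hnn : ∀ i, 0 ≤ p i := by
      intro i
      have h := hp (fun j => if j = i then v j - 1 else v j)
      have hle : g (fun j => if j = i then v j - 1 else v j) ≤ g v := by
        apply hmon
        intro j
        dsimp only
        split <;> linarith
      have hsum : ∑ j, p j * ((if j = i then v j - 1 else v j) - v j) = -p i := by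
        have heach : ∀ j, p j * ((if j = i then v j - 1 else v j) - v j)
            = -(if j = i then p i else 0) := by
          intro j
          by_cases hji : j = i
          · subst hji
            rw [if_pos rfl, if_pos rfl]
            ring
          · rw [if_neg hji, if_neg hji]
            ring
        rw [Finset.sum_congr rfl fun j _ => heach j]
        simp
      rw [hsum] at h
      linarith
    refine ⟨hnn, ?_⟩
    have hc : ∀ c : ℝ, (∑ i, p i) * c ≤ c := by
      intro c
      have h := hp (fun j => c + v j)
      have hg : g (fun j => c + v j) = c + g v := hhom c v
      have hsum : ∑ j, p j * ((c + v j) - v j) = (∑ i, p i) * c := by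
        rw [Finset.sum_mul]
        apply Finset.sum_congr rfl
        intro j _; ring
      rw [hsum, hg] at h
      linarith
    have h1 := hc 1
    have h2 := hc (-1)
    linarith
  -- nonemptiness via Hahn-Banach separation of the strict epigraph
  have hlip : ∀ a b : Fin n → ℝ, g a - g b ≤ dist a b := by
    intro a b
    have hdle : a ≤ fun i => dist a b + b i := by
      intro i
      have h1 : dist (a i) (b i) ≤ dist a b := dist_le_pi_dist a b i
      have h2 : a i - b i ≤ dist (a i) (b i) := by
        rw [Real.dist_eq]; exact le_abs_self _
      simpa using by linarith
    have := hmon hdle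
    rw [hhom] at this
    linarith
  have hcont : Continuous g := by
    have : LipschitzWith 1 g := by
      rw [lipschitzWith_iff_dist_le_mul]
      intro a b
      rw [Real.dist_eq, abs_sub_le_iff]
      constructor
      · simpa using hlip a b
      · have := hlip b a
        rw [dist_comm] at this
        simpa using this
    exact this.continuous
  have hne : S.Nonempty := by
    set E := {q : (Fin n → ℝ) × ℝ | g q.1 < q.2} with hEdef
    have hEopen : IsOpen E :=
      isOpen_lt (hcont.comp continuous_fst) continuous_snd
    have hEconv : Convex ℝ E := by
      intro q hq r hr a b ha hb hab
      simp only [hEdef, Set.mem_setOf_eq] at hq hr ⊢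
      have hg := hconv.2 (Set.mem_univ q.1) (Set.mem_univ r.1) ha hb hab
      simp only [smul_eq_mul] at hg
      rcases eq_or_lt_of_le ha with h0 | ha'
      · have hb1 : b = 1 := by linarith
        simpa [← h0, hb1] using hr
      · have h1 : a * g q.1 < a * q.2 := by
          exact mul_lt_mul_of_pos_left hq ha'
        have h2 : b * g r.1 ≤ b * r.2 := by
          exact mul_le_mul_of_nonneg_left (le_of_lt hr) hb
        calc g (a • q + b • r).1 = g (a • q.1 + b • r.1) := rfl
          _ ≤ a * g q.1 + b * g r.1 := hg
          _ < a * q.2 + b * r.2 := add_lt_add_of_lt_of_le h1 h2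
          _ = (a • q + b • r).2 := rfl
    have hvE : (v, g v) ∉ E := by simp [hEdef]
    obtain ⟨f, hf⟩ := geometric_hahn_banach_open_point hEconv hEopen hvE
    set c : ℝ := f (0, 1) with hcdef
    have hdecomp : ∀ (x : Fin n → ℝ) (t : ℝ), f (x, t) = f (x, 0) + t * c := by
      intro x t
      have hxt : (x, t) = (x, (0:ℝ)) + t • ((0 : Fin n → ℝ), (1:ℝ)) := by
        simp [Prod.ext_iff]
      rw [hxt, map_add, ContinuousLinearMap.map_smul, smul_eq_mul]
    have hc : c < 0 := by
      have h1 := hf (v, g v + 1)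
        (by simp only [hEdef, Set.mem_setOf_eq]; linarith)
      rw [hdecomp v (g v + 1), hdecomp v (g v)] at h1
      linarith
    have key : ∀ x, f (x, 0) + g x * c ≤ f (v, 0) + g v * c := by
      intro x
      refine le_of_forall_pos_le_add ?_
      intro ε hε
      have hmem : (x, g x + ε / (-c)) ∈ E := by
        have : 0 < ε / (-c) := div_pos hε (by linarith)
        simp only [hEdef, Set.mem_setOf_eq]
        linarith
      have h1 := hf _ hmem
      rw [hdecomp x (g x + ε / (-c)), hdecomp v (g v)] at h1
      have hcne : c ≠ 0 := ne_of_lt hc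
      have heq : (g x + ε / (-c)) * c = g x * c - ε := by
        have h2 : ε / -c * (-c) = ε := div_mul_cancel₀ ε (by linarith : -c ≠ 0)
        linear_combination -h2
      rw [heq] at h1
      linarith
    set L : (Fin n → ℝ) →ₗ[ℝ] ℝ :=
      f.toLinearMap.comp (LinearMap.inl ℝ (Fin n → ℝ) ℝ) with hLdef
    have hLapp : ∀ y, L y = f (y, 0) := fun y => rfl
    refine ⟨fun i => L (fun j => if i = j then 1 else 0) / (-c), ?_⟩
    intro x
    have hsum : ∑ i, (L (fun j => if i = j then 1 else 0) / (-c)) * (x i - v i)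
        = L (x - v) / (-c) := by
      rw [LinearMap.pi_apply_eq_sum_univ L (x - v), Finset.sum_div]
      apply Finset.sum_congr rfl
      intro i _
      simp only [Pi.sub_apply, smul_eq_mul]
      ring
    rw [hsum]
    have hLsub : L (x - v) = f (x, 0) - f (v, 0) := by
      rw [map_sub, hLapp, hLapp]
    rw [hLsub]
    rw [div_le_iff₀ (by linarith : (0:ℝ) < -c)]
    have := key x
    nlinarith [key x]
  -- convexity
  have hconvS : Convex ℝ S := by
    intro p hp q hq a b ha hb hab
    intro x
    have h1 := hp x
    have h2 := hq x
    have hsum : ∑ i, (a • p + b • q) i * (x i - v i)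
        = a * (∑ i, p i * (x i - v i)) + b * (∑ i, q i * (x i - v i)) := by
      rw [Finset.mul_sum, Finset.mul_sum, ← Finset.sum_add_distrib]
      apply Finset.sum_congr rfl
      intro i _
      simp only [Pi.add_apply, Pi.smul_apply, smul_eq_mul]
      ring
    rw [hsum]
    calc a * (∑ i, p i * (x i - v i)) + b * (∑ i, q i * (x i - v i))
        ≤ a * (g x - g v) + b * (g x - g v) :=
          add_le_add (mul_le_mul_of_nonneg_left h1 ha)
            (mul_le_mul_of_nonneg_left h2 hb)
      _ = g x - g v := by rw [← add_mul, hab, one_mul]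
  -- compactness
  have hcompact : IsCompact S := by
    have hclosed : IsClosed S := by
      have : S = ⋂ x : Fin n → ℝ,
          {p : Fin n → ℝ | ∑ i, p i * (x i - v i) ≤ g x - g v} := by
        ext p; simp [hSdef, Set.mem_iInter]
      rw [this]
      refine isClosed_iInter fun x => isClosed_le ?_ continuous_const
      exact continuous_finset_sum _ fun i _ => (continuous_apply i).mul continuous_const
    have hsub : S ⊆ Set.Icc (0 : Fin n → ℝ) 1 := by
      intro p hp
      obtain ⟨hnn, hsum⟩ := hstoch p hp
      constructor
      · intro i; exact hnn i
      · intro i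
        have : p i ≤ ∑ j, p j :=
          Finset.single_le_sum (fun j _ => hnn j) (Finset.mem_univ i)
        rw [hsum] at this
        exact this
    exact IsCompact.of_isClosed_subset isCompact_Icc hclosed hsub
  exact ⟨hne, hcompact, hconvS, hstoch⟩
end

section
/- Let f : ℝ^n → ℝ^n be convex, monotone, and additively homogeneous, and let v and v' be two eigenvectors of f. Then N^f(∂f(v)) = N^f(∂f(v')), 𝒞^f(∂f(v)) = 𝒞^f(∂f(v')), and 𝒢^f(∂f(v)) = 𝒢^f(∂f(v')); that is, the critical nodes, critical class collection, and critical graph of f do not depend on the choice of eigenvector. -/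
open Matrix Filter

section AuxStmt3

open Pointwise

variable {n : ℕ}

/-! ### Matrices in the subdifferential are stochastic -/

lemma aux_mulVec_single (P : Matrix (Fin n) (Fin n) ℝ) (i j : Fin n) :
    P.mulVec (Pi.single j 1) i = P i j := by
  simp [Matrix.mulVec, dotProduct_single]

lemma subdiff_nonneg {f : (Fin n → ℝ) → (Fin n → ℝ)} (hmon : Monotone f)
    {v : Fin n → ℝ} {P : Matrix (Fin n) (Fin n) ℝ} (hP : P ∈ Subdiff f v)
    (i j : Fin n) : 0 ≤ P i j := by
  set x : Fin n → ℝ := fun k => v k - Pi.single (M := fun _ => ℝ) j 1 k with hxdef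
  have hsingle_nonneg : ∀ k, (0:ℝ) ≤ Pi.single (M := fun _ => ℝ) j 1 k := by
    intro k
    rcases eq_or_ne k j with rfl | h
    · simp
    · rw [Pi.single_eq_of_ne h]
  have hxle : x ≤ v := fun k => by
    have := hsingle_nonneg k
    simp only [hxdef]
    linarith
  have h2 : f x i ≤ f v i := hmon hxle i
  have h1 := hP x i
  have h3 : P.mulVec (x - v) i = -(P i j) := by
    have hx : x - v = -(Pi.single (M := fun _ => ℝ) j 1) := by
      funext k; simp [hxdef, Pi.sub_apply]
    rw [hx, Matrix.mulVec_neg, Pi.neg_apply, aux_mulVec_single]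
  rw [h3] at h1
  linarith

lemma subdiff_rowsum {f : (Fin n → ℝ) → (Fin n → ℝ)} (hhom : AddHomog f)
    {v : Fin n → ℝ} {P : Matrix (Fin n) (Fin n) ℝ} (hP : P ∈ Subdiff f v)
    (i : Fin n) : ∑ j, P i j = 1 := by
  have key : ∀ c : ℝ, P.mulVec (fun _ => c) i ≤ c := by
    intro c
    have h1 := hP (fun k => c + v k) i
    have h2 : f (fun k => c + v k) i = c + f v i := by
      rw [hhom c v]
    have h3 : (fun k => c + v k) - v = fun _ => c := by
      funext k; simp
    rw [h3, h2] at h1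
    linarith
  have hmv : ∀ c : ℝ, P.mulVec (fun _ => c) i = c * ∑ j, P i j := by
    intro c
    simp [Matrix.mulVec, dotProduct, Finset.mul_sum, mul_comm]
  have hle1 := key 1
  have hle2 := key (-1)
  rw [hmv 1] at hle1
  rw [hmv (-1)] at hle2
  linarith

/-! ### The eigenvalue is unique -/

lemma eigenvalue_le {f : (Fin n → ℝ) → (Fin n → ℝ)} (hn : 1 ≤ n)
    (hmon : Monotone f) (hhom : AddHomog f)
    {v v' : Fin n → ℝ} {lam lam' : ℝ}
    (hv : f v = fun i => lam + v i) (hv' : f v' = fun i => lam' + v' i) :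
    lam ≤ lam' := by
  have hiter_hom : ∀ (k : ℕ) (c : ℝ) (x : Fin n → ℝ),
      f^[k] (fun i => c + x i) = fun i => c + f^[k] x i := by
    intro k
    induction k with
    | zero => intro c x; simp
    | succ k ih =>
      intro c x
      rw [Function.iterate_succ_apply', Function.iterate_succ_apply', ih c x, hhom]
  have hiter : ∀ (x : Fin n → ℝ) (μ : ℝ), f x = (fun i => μ + x i) →
      ∀ k : ℕ, f^[k] x = fun i => (k : ℝ) * μ + x i := by
    intro x μ hx k
    induction k with
    | zero => simp
    | succ k ih =>
      rw [Function.iterate_succ_apply', ih, hhom, hx]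
      funext i
      push_cast
      ring
  set i0 : Fin n := ⟨0, hn⟩
  set c : ℝ := ∑ i, |v i - v' i| with hc
  have hcle : ∀ i, v i ≤ c + v' i := by
    intro i
    have h1 : |v i - v' i| ≤ c := by
      apply Finset.single_le_sum (f := fun i => |v i - v' i|)
        (fun j _ => abs_nonneg _) (Finset.mem_univ i)
    have := abs_le.mp h1
    linarith [this.2]
  have hk : ∀ k : ℕ, (k : ℝ) * lam + v i0 ≤ c + ((k : ℝ) * lam' + v' i0) := by
    intro k
    have h1 : f^[k] v ≤ f^[k] (fun i => c + v' i) :=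
      (hmon.iterate k) (fun i => hcle i)
    have h2 := hiter v lam hv k
    have h3 := hiter v' lam' hv' k
    have h4 := hiter_hom k c v'
    rw [h2, h4, h3] at h1
    exact h1 i0
  by_contra hlt
  push_neg at hlt
  obtain ⟨k, hk'⟩ := exists_nat_gt ((c + v' i0 - v i0) / (lam - lam'))
  have hpos : 0 < lam - lam' := by linarith
  have := hk k
  rw [div_lt_iff₀ hpos] at hk'
  nlinarith

/-! ### Existence of subgradients (Hahn–Banach) -/

lemma exists_subgradient {g : (Fin n → ℝ) → ℝ} (hg : ConvexOn ℝ Set.univ g)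
    (v : Fin n → ℝ) :
    ∃ r : Fin n → ℝ, ∀ x : Fin n → ℝ, (∑ k, r k * (x k - v k)) ≤ g x - g v := by
  classical
  set q : (Fin n → ℝ) → ℝ → ℝ := fun h t => (g (v + t • h) - g v) / t with hq
  have hcvx : ∀ (x y : Fin n → ℝ) (a b : ℝ), 0 ≤ a → 0 ≤ b → a + b = 1 →
      g (a • x + b • y) ≤ a * g x + b * g y := by
    intro x y a b ha hb hab
    exact hg.2 (Set.mem_univ x) (Set.mem_univ y) ha hb hab
  -- monotonicity of difference quotients
  have hmono : ∀ (h : Fin n → ℝ) (s t : ℝ), 0 < s → s ≤ t → q h s ≤ q h t := by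
    intro h s t hs hst
    have ht : 0 < t := lt_of_lt_of_le hs hst
    have hdecomp : v + s • h = (1 - s / t) • v + (s / t) • (v + t • h) := by
      funext k
      simp only [Pi.add_apply, Pi.smul_apply, smul_eq_mul]
      field_simp
      ring
    have hineq : g (v + s • h) ≤ (1 - s / t) * g v + (s / t) * g (v + t • h) := by
      rw [hdecomp]
      apply hcvx
      · have : s / t ≤ 1 := (div_le_one ht).mpr hst
        linarith
      · positivity
      · ring
    have h2 := mul_le_mul_of_nonneg_right hineq ht.le
    have e : ((1 - s / t) * g v + s / t * g (v + t • h)) * t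
        = (t - s) * g v + s * g (v + t • h) := by
      field_simp
      try ring
    rw [e] at h2
    simp only [hq]
    rw [div_le_div_iff₀ hs ht]
    nlinarith [h2]
  -- lower bound on difference quotients
  have hlb : ∀ (h : Fin n → ℝ) (t : ℝ), 0 < t → g v - g (v - h) ≤ q h t := by
    intro h t ht
    have hdecomp : v = (t / (t + 1)) • (v - h) + (1 / (t + 1)) • (v + t • h) := by
      funext k
      simp only [Pi.add_apply, Pi.sub_apply, Pi.smul_apply, smul_eq_mul]
      have : t + 1 ≠ 0 := by positivity
      field_simp
      ring
    have hineq : g v ≤ (t / (t + 1)) * g (v - h) + (1 / (t + 1)) * g (v + t • h) := by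
      conv_lhs => rw [hdecomp]
      apply hcvx
      · positivity
      · positivity
      · field_simp
    simp only [hq]
    rw [le_div_iff₀ ht]
    have ht1 : (0:ℝ) < t + 1 := by positivity
    have h2 := mul_le_mul_of_nonneg_right hineq ht1.le
    have e1 : t / (t + 1) * g (v - h) * (t+1) = t * g (v - h) := by field_simp
    have e2 : 1 / (t + 1) * g (v + t • h) * (t+1) = g (v + t • h) := by field_simp
    nlinarith [h2]
  set S : (Fin n → ℝ) → Set ℝ := fun h => {q' | ∃ t : ℝ, 0 < t ∧ q' = q h t} with hS
  have hSne : ∀ h, (S h).Nonempty := fun h => ⟨q h 1, 1, one_pos, rfl⟩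
  have hSbdd : ∀ h, BddBelow (S h) := by
    intro h
    refine ⟨g v - g (v - h), ?_⟩
    rintro x ⟨t, ht, rfl⟩
    exact hlb h t ht
  set N : (Fin n → ℝ) → ℝ := fun h => sInf (S h) with hN
  have hN_le_q : ∀ h t, 0 < t → N h ≤ q h t := by
    intro h t ht
    exact csInf_le (hSbdd h) ⟨t, ht, rfl⟩
  have hq_in : ∀ h (t : ℝ), 0 < t → q h t ∈ S h := fun h t ht => ⟨t, ht, rfl⟩
  -- positive homogeneity
  have N_hom : ∀ c : ℝ, 0 < c → ∀ h, N (c • h) = c * N h := by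
    intro c hc h
    have hset : S (c • h) = c • S h := by
      ext y
      constructor
      · rintro ⟨t, ht, rfl⟩
        refine ⟨q h (t * c), ⟨t * c, by positivity, rfl⟩, ?_⟩
        simp only [hq, smul_eq_mul]
        have : t • c • h = (t * c) • h := by rw [smul_smul]
        rw [this]
        field_simp
      · rintro ⟨p, ⟨s, hs, rfl⟩, rfl⟩
        refine ⟨s / c, by positivity, ?_⟩
        simp only [hq, smul_eq_mul]
        have : (s / c) • c • h = s • h := by
          rw [smul_smul]
          congr 1
          field_simp
        rw [this]
        field_simp
    simp only [hN]
    rw [hset, Real.sInf_smul_of_nonneg hc.le]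
    simp [smul_eq_mul]
  -- subadditivity
  have N_add : ∀ h k, N (h + k) ≤ N h + N k := by
    intro h k
    apply le_of_forall_pos_le_add
    intro ε hε
    have hε2 : 0 < ε / 2 := by positivity
    obtain ⟨x1, hx1S, hx1⟩ := Real.lt_sInf_add_pos (hSne h) hε2
    obtain ⟨x2, hx2S, hx2⟩ := Real.lt_sInf_add_pos (hSne k) hε2
    obtain ⟨t1, ht1, rfl⟩ := hx1S
    obtain ⟨t2, ht2, rfl⟩ := hx2S
    set t : ℝ := min t1 t2 / 2 with htdef
    have ht : 0 < t := by
      have := lt_min ht1 ht2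
      positivity
    have h2t1 : 2 * t ≤ t1 := by
      have := min_le_left t1 t2
      simp only [htdef]
      linarith
    have h2t2 : 2 * t ≤ t2 := by
      have := min_le_right t1 t2
      simp only [htdef]
      linarith
    have h2tpos : 0 < 2 * t := by positivity
    have hsplit : q (h + k) t ≤ q h (2 * t) + q k (2 * t) := by
      have hdecomp : v + t • (h + k) =
          (1/2 : ℝ) • (v + (2 * t) • h) + (1/2 : ℝ) • (v + (2 * t) • k) := by
        funext i
        simp only [Pi.add_apply, Pi.smul_apply, smul_eq_mul]
        ring
      have hineq := by
        calc g (v + t • (h + k))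
            = g ((1/2 : ℝ) • (v + (2 * t) • h) + (1/2 : ℝ) • (v + (2 * t) • k)) := by
              rw [hdecomp]
          _ ≤ (1/2 : ℝ) * g (v + (2 * t) • h) + (1/2 : ℝ) * g (v + (2 * t) • k) :=
              hcvx _ _ _ _ (by norm_num) (by norm_num) (by norm_num)
      simp only [hq]
      rw [← add_div, div_le_div_iff₀ ht h2tpos]
      nlinarith [hineq]
    calc N (h + k) ≤ q (h + k) t := hN_le_q _ t ht
      _ ≤ q h (2 * t) + q k (2 * t) := hsplit
      _ ≤ q h t1 + q k t2 := by
          have := hmono h (2 * t) t1 h2tpos h2t1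
          have := hmono k (2 * t) t2 h2tpos h2t2
          linarith
      _ ≤ (N h + ε / 2) + (N k + ε / 2) := by linarith
      _ = N h + N k + ε := by ring
  have hN0 : 0 ≤ N 0 := by
    have := N_add 0 0
    simp only [add_zero] at this
    linarith
  -- Hahn-Banach extension from the trivial subspace
  obtain ⟨G, -, hG⟩ := exists_extension_of_le_sublinear
    ⟨(⊥ : Submodule ℝ (Fin n → ℝ)), 0⟩ N N_hom N_add
    (by
      rintro ⟨x, hx⟩
      have hx0 : x = 0 := by simpa using hx
      subst hx0
      simpa using hN0)
  refine ⟨fun k => G (fun j => if k = j then 1 else 0), fun x => ?_⟩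
  have hGsum : G (x - v) = ∑ k, (x - v) k • G (fun j => if k = j then 1 else 0) :=
    LinearMap.pi_apply_eq_sum_univ G (x - v)
  have hle : G (x - v) ≤ N (x - v) := hG (x - v)
  have hNq : N (x - v) ≤ g x - g v := by
    have h1 : N (x - v) ≤ q (x - v) 1 := hN_le_q _ 1 one_pos
    have h2 : q (x - v) 1 = g x - g v := by
      simp only [hq, one_smul, div_one]
      congr 2
      funext k
      simp
    linarith
  calc (∑ k, G (fun j => if k = j then 1 else 0) * (x k - v k))
      = ∑ k, (x - v) k • G (fun j => if k = j then 1 else 0) := by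
        apply Finset.sum_congr rfl
        intro k _
        simp [mul_comm]
    _ = G (x - v) := hGsum.symm
    _ ≤ N (x - v) := hle
    _ ≤ g x - g v := hNq

end AuxStmt3
section AuxStmt3b

variable {n : ℕ}

/-! ### Invariant measure supported on a final class -/

lemma exists_invariant_measure {P : Matrix (Fin n) (Fin n) ℝ}
    (hnn : ∀ i j, 0 ≤ P i j) (hrow : ∀ i, ∑ j, P i j = 1)
    {C : Set (Fin n)} (hC : IsFinalClass P C) :
    ∃ m : Fin n → ℝ, (∀ i, 0 ≤ m i) ∧ (∀ j, (∑ i, m i * P i j) = m j) ∧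
      (∀ i, i ∉ C → m i = 0) ∧ (∀ i ∈ C, 0 < m i) := by
  classical
  obtain ⟨⟨i0, hC0⟩, hfin⟩ := hC
  have hi0 : i0 ∈ C := by
    rw [hC0]; exact ⟨Relation.ReflTransGen.refl, Relation.ReflTransGen.refl⟩
  have hPzero : ∀ i ∈ C, ∀ j, j ∉ C → P i j = 0 := by
    intro i hi j hj
    by_contra hne
    exact hj (hfin i hi j (Relation.ReflTransGen.single hne))
  haveI : Nonempty ↥C := ⟨⟨i0, hi0⟩⟩
  set P' : Matrix ↥C ↥C ℝ := Matrix.of (fun i j => P i.1 j.1) with hP'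
  -- summing over the subtype
  have hsubsum : ∀ (F : Fin n → ℝ), (∀ j, j ∉ C → F j = 0) →
      ∑ j : ↥C, F j.1 = ∑ j, F j := by
    intro F hF
    rw [← Finset.sum_subtype (Finset.univ.filter (fun j => j ∈ C))
      (fun x => by simp) F]
    apply Finset.sum_filter_of_ne
    intro x _ hx
    by_contra h
    exact hx (hF x h)
  have hrow' : ∀ i : ↥C, ∑ j : ↥C, P' i j = 1 := by
    intro i
    have := hsubsum (fun j => P i.1 j) (fun j hj => hPzero i.1 i.2 j hj)
    simpa [hP'] using this.trans (hrow i.1)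
  -- the all-ones vector is in the kernel of P' - 1
  have hones : (P' - 1).mulVec (fun _ => (1:ℝ)) = 0 := by
    funext i
    rw [Matrix.sub_mulVec]
    have h1 : P'.mulVec (fun _ => (1:ℝ)) i = 1 := by
      simp only [Matrix.mulVec, dotProduct, mul_one]
      exact hrow' i
    have h2 : (1 : Matrix ↥C ↥C ℝ).mulVec (fun _ => (1:ℝ)) i = 1 := by
      rw [Matrix.one_mulVec]
    simp [h1, h2]
  have hdet : (P' - 1).det = 0 := by
    apply Matrix.exists_mulVec_eq_zero_iff.mp
    refine ⟨fun _ => (1:ℝ), ?_, hones⟩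
    intro h
    have := congrFun h ⟨i0, hi0⟩
    norm_num at this
  have hdetT : ((P' - 1)ᵀ).det = 0 := by rw [Matrix.det_transpose]; exact hdet
  obtain ⟨w, hw0, hww⟩ := Matrix.exists_mulVec_eq_zero_iff.mpr hdetT
  have hwinv : ∀ j : ↥C, ∑ i : ↥C, w i * P' i j = w j := by
    have h1 : P'ᵀ.mulVec w = w := by
      rw [Matrix.transpose_sub, Matrix.transpose_one, Matrix.sub_mulVec,
        Matrix.one_mulVec] at hww
      have := sub_eq_zero.mp hww
      exact this
    intro j
    have := congrFun h1 j
    simpa [Matrix.mulVec, dotProduct, Matrix.transpose_apply, mul_comm]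
      using this
  set m' : ↥C → ℝ := fun i => |w i| with hm'
  have habs : ∀ j : ↥C, m' j ≤ ∑ i : ↥C, m' i * P' i j := by
    intro j
    calc m' j = |∑ i : ↥C, w i * P' i j| := by rw [hwinv j]
      _ ≤ ∑ i : ↥C, |w i * P' i j| := Finset.abs_sum_le_sum_abs _ _
      _ = ∑ i : ↥C, m' i * P' i j := by
          apply Finset.sum_congr rfl
          intro i _
          rw [abs_mul]
          congr 1
          exact abs_of_nonneg (hnn i.1 j.1)
  have hsums : ∑ j : ↥C, (∑ i : ↥C, m' i * P' i j) = ∑ j : ↥C, m' j := by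
    rw [Finset.sum_comm]
    apply Finset.sum_congr rfl
    intro i _
    rw [← Finset.mul_sum, hrow' i, mul_one]
  have heq : ∀ j : ↥C, ∑ i : ↥C, m' i * P' i j = m' j := by
    have := (Finset.sum_eq_sum_iff_of_le (fun j (_ : j ∈ Finset.univ) => habs j)).mp
      hsums.symm
    intro j
    exact (this j (Finset.mem_univ j)).symm
  set m : Fin n → ℝ := fun j => if h : j ∈ C then m' ⟨j, h⟩ else 0 with hm
  have hm0 : ∀ i, 0 ≤ m i := by
    intro i
    simp only [hm]
    split
    · exact abs_nonneg _
    · exact le_refl 0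
  have hmoff : ∀ i, i ∉ C → m i = 0 := by
    intro i hi
    simp only [hm, dif_neg hi]
  have hmC : ∀ (i : Fin n) (hi : i ∈ C), m i = m' ⟨i, hi⟩ := by
    intro i hi
    simp only [hm, dif_pos hi]
  have hminv : ∀ j, (∑ i, m i * P i j) = m j := by
    intro j
    have hzero : ∀ i, i ∉ C → m i * P i j = 0 := fun i hi => by
      rw [hmoff i hi, zero_mul]
    have hs : ∑ i : ↥C, m i.1 * P i.1 j = ∑ i, m i * P i j :=
      hsubsum (fun i => m i * P i j) hzero
    by_cases hj : j ∈ C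
    · rw [← hs]
      have : ∑ i : ↥C, m i.1 * P i.1 j = ∑ i : ↥C, m' i * P' i ⟨j, hj⟩ := by
        apply Finset.sum_congr rfl
        intro i _
        rw [hmC i.1 i.2]
        simp [hP']
      rw [this, heq ⟨j, hj⟩, hmC j hj]
    · rw [← hs, hmoff j hj]
      apply Finset.sum_eq_zero
      intro i _
      rw [hPzero i.1 i.2 j hj, mul_zero]
  refine ⟨m, hm0, hminv, hmoff, ?_⟩
  -- positivity on C
  have hstep : ∀ a b : Fin n, 0 < m a → P a b ≠ 0 → 0 < m b := by
    intro a b hma hab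
    have hPab : 0 < P a b := lt_of_le_of_ne (hnn a b) (Ne.symm hab)
    have h1 : m a * P a b ≤ ∑ i, m i * P i b := by
      apply Finset.single_le_sum (f := fun i => m i * P i b)
        (fun i _ => mul_nonneg (hm0 i) (hnn i b)) (Finset.mem_univ a)
    rw [hminv b] at h1
    nlinarith
  have hacc : ∀ a b : Fin n, MatAccess P a b → 0 < m a → 0 < m b := by
    intro a b h
    induction h with
    | refl => exact id
    | tail _ hbc ih => exact fun ha => hstep _ _ (ih ha) hbc
  obtain ⟨i1, hi1⟩ := Function.ne_iff.mp hw0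
  have hi1pos : 0 < m i1.1 := by
    rw [hmC i1.1 i1.2]
    simp only [hm']
    have : (⟨i1.1, i1.2⟩ : ↥C) = i1 := rfl
    rw [this]
    exact abs_pos.mpr (by simpa using hi1)
  intro j hj
  have hacc1 : MatAccess P i1.1 j := by
    have h1 : i1.1 ∈ {j | MatAccess P i0 j ∧ MatAccess P j i0} := by
      rw [← hC0]; exact i1.2
    have h2 : j ∈ {j | MatAccess P i0 j ∧ MatAccess P j i0} := by
      rw [← hC0]; exact hj
    exact Relation.ReflTransGen.trans h1.2 h2.1
  exact hacc i1.1 j hacc1 hi1pos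

/-! ### Rows on the final class are subgradients at the other eigenvector -/

lemma subgrad_rows_at_other {f : (Fin n → ℝ) → (Fin n → ℝ)}
    {v v' : Fin n → ℝ} {lam : ℝ}
    (hv : f v = fun i => lam + v i) (hv' : f v' = fun i => lam + v' i)
    {P : Matrix (Fin n) (Fin n) ℝ} (hP : P ∈ Subdiff f v) {m : Fin n → ℝ}
    (hm0 : ∀ i, 0 ≤ m i) (hminv : ∀ j, (∑ i, m i * P i j) = m j)
    {C : Set (Fin n)} (hmpos : ∀ i ∈ C, 0 < m i) :
    ∀ i ∈ C, ∀ x, P.mulVec (x - v') i ≤ f x i - f v' i := by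
  classical
  set gd : Fin n → ℝ := fun i => f v' i - f v i - P.mulVec (v' - v) i with hgd
  have hg0 : ∀ i, 0 ≤ gd i := by
    intro i
    have := hP v' i
    simp only [hgd]
    linarith
  have hsum : ∑ i, m i * gd i = 0 := by
    have e1 : ∑ i, m i * f v' i = lam * (∑ i, m i) + ∑ i, m i * v' i := by
      rw [hv']
      simp only [mul_add]
      rw [Finset.sum_add_distrib, Finset.mul_sum]
      congr 1
      apply Finset.sum_congr rfl
      intro i _
      ring
    have e2 : ∑ i, m i * f v i = lam * (∑ i, m i) + ∑ i, m i * v i := by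
      rw [hv]
      simp only [mul_add]
      rw [Finset.sum_add_distrib, Finset.mul_sum]
      congr 1
      apply Finset.sum_congr rfl
      intro i _
      ring
    have e3 : ∑ i, m i * P.mulVec (v' - v) i
        = (∑ i, m i * v' i) - ∑ i, m i * v i := by
      calc ∑ i, m i * P.mulVec (v' - v) i
          = ∑ i, ∑ j, m i * P i j * (v' j - v j) := by
            apply Finset.sum_congr rfl
            intro i _
            simp only [Matrix.mulVec, dotProduct, Finset.mul_sum, Pi.sub_apply]
            apply Finset.sum_congr rfl
            intro j _
            ring
        _ = ∑ j, (∑ i, m i * P i j) * (v' j - v j) := by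
            rw [Finset.sum_comm]
            apply Finset.sum_congr rfl
            intro j _
            rw [Finset.sum_mul]
        _ = ∑ j, m j * (v' j - v j) := by
            apply Finset.sum_congr rfl
            intro j _
            rw [hminv j]
        _ = (∑ j, m j * v' j) - ∑ j, m j * v j := by
            rw [← Finset.sum_sub_distrib]
            apply Finset.sum_congr rfl
            intro j _
            ring
    have expand : ∑ i, m i * gd i
        = (∑ i, m i * f v' i) - (∑ i, m i * f v i)
          - ∑ i, m i * P.mulVec (v' - v) i := by
      simp only [hgd]
      rw [← Finset.sum_sub_distrib, ← Finset.sum_sub_distrib]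
      apply Finset.sum_congr rfl
      intro i _
      ring
    rw [expand, e1, e2, e3]
    ring
  have hzero := (Finset.sum_eq_zero_iff_of_nonneg
    (fun i (_ : i ∈ Finset.univ) => mul_nonneg (hm0 i) (hg0 i))).mp hsum
  intro i hi x
  have hgi : gd i = 0 := by
    have h1 := hzero i (Finset.mem_univ i)
    have h2 := (hmpos i hi).ne'
    rcases mul_eq_zero.mp h1 with h | h
    · exact absurd h h2
    · exact h
  have h1 := hP x i
  have hlin : P.mulVec (x - v') i = P.mulVec (x - v) i - P.mulVec (v' - v) i := by
    have hd : x - v' = (x - v) - (v' - v) := by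
      funext k
      simp only [Pi.sub_apply]
      ring
    rw [hd, Matrix.mulVec_sub, Pi.sub_apply]
  simp only [hgd] at hgi
  rw [hlin]
  linarith

/-! ### Transferring a final class along rows agreement -/

lemma final_transfer {P Q : Matrix (Fin n) (Fin n) ℝ} {C : Set (Fin n)}
    (hC : IsFinalClass P C) (hagree : ∀ i ∈ C, ∀ j, Q i j = P i j) :
    IsFinalClass Q C := by
  obtain ⟨⟨i0, hC0⟩, hfin⟩ := hC
  have hi0 : i0 ∈ C := by
    rw [hC0]; exact ⟨Relation.ReflTransGen.refl, Relation.ReflTransGen.refl⟩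
  have haveA : ∀ i j : Fin n, MatAccess P i j → i ∈ C → j ∈ C ∧ MatAccess Q i j := by
    intro i j h
    induction h with
    | refl => exact fun hi => ⟨hi, Relation.ReflTransGen.refl⟩
    | @tail b c _ hbc ih =>
      intro hi
      obtain ⟨hb, hqb⟩ := ih hi
      refine ⟨hfin b hb c (Relation.ReflTransGen.single hbc), ?_⟩
      exact hqb.tail (by rw [hagree b hb c]; exact hbc)
  have haveB : ∀ i j : Fin n, MatAccess Q i j → i ∈ C → j ∈ C ∧ MatAccess P i j := by
    intro i j h
    induction h with
    | refl => exact fun hi => ⟨hi, Relation.ReflTransGen.refl⟩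
    | @tail b c _ hbc ih =>
      intro hi
      obtain ⟨hb, hpb⟩ := ih hi
      have hbc' : P b c ≠ 0 := by rw [← hagree b hb c]; exact hbc
      exact ⟨hfin b hb c (Relation.ReflTransGen.single hbc'), hpb.tail hbc'⟩
  constructor
  · refine ⟨i0, ?_⟩
    ext j
    constructor
    · intro hj
      have hj' : j ∈ {j | MatAccess P i0 j ∧ MatAccess P j i0} := by
        rw [← hC0]; exact hj
      exact ⟨(haveA i0 j hj'.1 hi0).2, (haveA j i0 hj'.2 hj).2⟩
    · rintro ⟨hq1, hq2⟩
      exact (haveB i0 j hq1 hi0).1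
  · intro i hi j hacc
    exact (haveB i j hacc hi).1

end AuxStmt3b
section AuxStmt3c

variable {n : ℕ}

/-- Key lemma: every final class (with its rows) of a subgradient matrix at one
eigenvector also arises from a subgradient matrix at any other eigenvector. -/
lemma key_transfer (hn : 1 ≤ n) {f : (Fin n → ℝ) → (Fin n → ℝ)}
    (hconv : IsConvexMap f) (hmon : Monotone f) (hhom : AddHomog f)
    {v v' : Fin n → ℝ} {lam lam' : ℝ}
    (hv : f v = fun i => lam + v i) (hv' : f v' = fun i => lam' + v' i) :
    ∀ P ∈ Subdiff f v, ∀ C : Set (Fin n), IsFinalClass P C →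
      ∃ Q ∈ Subdiff f v', IsFinalClass Q C ∧ ∀ i ∈ C, ∀ j, Q i j = P i j := by
  classical
  intro P hP C hC
  have hlam : lam = lam' :=
    le_antisymm (eigenvalue_le hn hmon hhom hv hv') (eigenvalue_le hn hmon hhom hv' hv)
  have hv'' : f v' = fun i => lam + v' i := by rw [hlam]; exact hv'
  obtain ⟨m, hm0, hminv, _, hmpos⟩ := exists_invariant_measure
    (fun i j => subdiff_nonneg hmon hP i j) (fun i => subdiff_rowsum hhom hP i) hC
  have hrows := subgrad_rows_at_other hv hv'' hP hm0 hminv hmpos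
  have hRex : ∀ i : Fin n, ∃ r : Fin n → ℝ,
      ∀ x, (∑ k, r k * (x k - v' k)) ≤ f x i - f v' i :=
    fun i => exists_subgradient (hconv i) v'
  choose R hR using hRex
  set Q : Matrix (Fin n) (Fin n) ℝ :=
    Matrix.of (fun i j => if i ∈ C then P i j else R i j) with hQ
  have hagree : ∀ i ∈ C, ∀ j, Q i j = P i j := by
    intro i hi j
    simp [hQ, hi]
  have hQsub : Q ∈ Subdiff f v' := by
    intro x i
    by_cases hi : i ∈ C
    · have he : Q.mulVec (x - v') i = P.mulVec (x - v') i := by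
        simp only [Matrix.mulVec, dotProduct]
        apply Finset.sum_congr rfl
        intro k _
        rw [hagree i hi k]
      rw [he]
      exact hrows i hi x
    · have he : Q.mulVec (x - v') i = ∑ k, R i k * (x k - v' k) := by
        simp only [Matrix.mulVec, dotProduct]
        apply Finset.sum_congr rfl
        intro k _
        simp [hQ, hi, Pi.sub_apply]
      rw [he]
      exact hR i x
  exact ⟨Q, hQsub, final_transfer hC hagree, hagree⟩

lemma incl_all (hn : 1 ≤ n) {f : (Fin n → ℝ) → (Fin n → ℝ)}
    (hconv : IsConvexMap f) (hmon : Monotone f) (hhom : AddHomog f)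
    {v v' : Fin n → ℝ} {lam lam' : ℝ}
    (hv : f v = fun i => lam + v i) (hv' : f v' = fun i => lam' + v' i) :
    finalNodesSet (Subdiff f v) ⊆ finalNodesSet (Subdiff f v') ∧
    finalClassesSet (Subdiff f v) ⊆ finalClassesSet (Subdiff f v') ∧
    ∀ i j, finalGraphSet (Subdiff f v) i j → finalGraphSet (Subdiff f v') i j := by
  refine ⟨?_, ?_, ?_⟩
  · rintro i ⟨P, hP, C, hC, hiC⟩
    obtain ⟨Q, hQ, hQC, -⟩ := key_transfer hn hconv hmon hhom hv hv' P hP C hC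
    exact ⟨Q, hQ, C, hQC, hiC⟩
  · rintro C ⟨P, hP, hC⟩
    obtain ⟨Q, hQ, hQC, -⟩ := key_transfer hn hconv hmon hhom hv hv' P hP C hC
    exact ⟨Q, hQ, hQC⟩
  · rintro i j ⟨P, hP, C, hC, hiC, hjC, hne⟩
    obtain ⟨Q, hQ, hQC, hag⟩ := key_transfer hn hconv hmon hhom hv hv' P hP C hC
    refine ⟨Q, hQ, C, hQC, hiC, hjC, ?_⟩
    rw [hag i hiC j]
    exact hne

end AuxStmt3c
/-- the critical data of a convex monotone additively homogeneous map
does not depend on the choice of the eigenvector. -/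
theorem stmt3 (n : ℕ) (hn : 1 ≤ n) (f : (Fin n → ℝ) → (Fin n → ℝ))
    (hconv : IsConvexMap f) (hmon : Monotone f) (hhom : AddHomog f)
    (v v' : Fin n → ℝ) (lam lam' : ℝ)
    (hv : f v = fun i => lam + v i) (hv' : f v' = fun i => lam' + v' i) :
    finalNodesSet (Subdiff f v) = finalNodesSet (Subdiff f v') ∧
    finalClassesSet (Subdiff f v) = finalClassesSet (Subdiff f v') ∧
    finalGraphSet (Subdiff f v) = finalGraphSet (Subdiff f v') := by
  obtain ⟨h1, h2, h3⟩ := incl_all hn hconv hmon hhom hv hv'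
  obtain ⟨h1', h2', h3'⟩ := incl_all hn hconv hmon hhom hv' hv
  refine ⟨Set.Subset.antisymm h1 h1', Set.Subset.antisymm h2 h2', ?_⟩
  funext i j
  exact propext ⟨h3 i j, h3' i j⟩
end

section
/- (Discrete maximum principle) Let P be an n×n stochastic matrix and let v ∈ ℝ^n satisfy Pv ≤ v componentwise. Then: (1) the restriction of v to any final class of P is a constant vector; (2) (Pv)_i = v_i for every i in N^f(P), the union of the final classes of P; (3) the minimum min_i v_i is attained at some node belonging to a final class of P. -/
open Matrix Filter

lemma key_step {n : ℕ} {P : Matrix (Fin n) (Fin n) ℝ} (hP : IsStochMat P)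
    {v : Fin n → ℝ} (hv : ∀ i, P.mulVec v i ≤ v i) {C : Set (Fin n)}
    (hC : ∀ i ∈ C, ∀ j, P i j ≠ 0 → j ∈ C) {m : ℝ} (hm : ∀ j ∈ C, m ≤ v j)
    {i : Fin n} (hi : i ∈ C) (hvi : v i = m) :
    ∀ j, P i j ≠ 0 → (j ∈ C ∧ v j = m) := by
  have hterm : ∀ j, (0:ℝ) ≤ P i j * (v j - m) := by
    intro j
    rcases eq_or_ne (P i j) 0 with h | h
    · simp [h]
    · exact mul_nonneg ((hP i).1 j) (sub_nonneg.mpr (hm j (hC i hi j h)))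
  have hsum : ∑ j, P i j * v j ≤ m := by
    have h := hv i
    rw [hvi] at h
    simpa [Matrix.mulVec, dotProduct] using h
  have hsum2 : ∑ j, P i j * (v j - m) ≤ 0 := by
    have : ∑ j, P i j * (v j - m) = (∑ j, P i j * v j) - (∑ j, P i j) * m := by
      rw [Finset.sum_mul, ← Finset.sum_sub_distrib]
      congr 1; ext j; ring
    rw [this, (hP i).2, one_mul]
    linarith
  have hzero : ∀ j ∈ Finset.univ, P i j * (v j - m) = 0 := by
    rw [← Finset.sum_eq_zero_iff_of_nonneg (fun j _ => hterm j)]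
    exact le_antisymm hsum2 (Finset.sum_nonneg fun j _ => hterm j)
  intro j hj
  refine ⟨hC i hi j hj, ?_⟩
  have := hzero j (Finset.mem_univ j)
  rcases mul_eq_zero.mp this with h | h
  · exact absurd h hj
  · linarith [sub_eq_zero.mp h]

lemma key_access {n : ℕ} {P : Matrix (Fin n) (Fin n) ℝ} (hP : IsStochMat P)
    {v : Fin n → ℝ} (hv : ∀ i, P.mulVec v i ≤ v i) {C : Set (Fin n)}
    (hC : ∀ i ∈ C, ∀ j, P i j ≠ 0 → j ∈ C) {m : ℝ} (hm : ∀ j ∈ C, m ≤ v j)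
    {i : Fin n} (hi : i ∈ C) (hvi : v i = m) :
    ∀ j, MatAccess P i j → j ∈ C ∧ v j = m := by
  intro j hj
  induction hj with
  | refl => exact ⟨hi, hvi⟩
  | tail _ h ih => exact key_step hP hv hC hm ih.1 ih.2 _ h

lemma exists_access_final {n : ℕ} (P : Matrix (Fin n) (Fin n) ℝ) (i : Fin n) :
    ∃ j, MatAccess P i j ∧ j ∈ finalNodes P := by
  classical
  set R : Fin n → Finset (Fin n) :=
    fun k => Finset.univ.filter (fun l => MatAccess P k l) with hR
  have hA : i ∈ Finset.univ.filter (fun k => MatAccess P i k) := by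
    simp only [Finset.mem_filter, Finset.mem_univ, true_and]
    exact Relation.ReflTransGen.refl
  obtain ⟨j, hjA, hjmin⟩ :=
    Finset.exists_min_image _ (fun k => (R k).card) ⟨i, hA⟩
  have hij : MatAccess P i j := (Finset.mem_filter.mp hjA).2
  have back : ∀ k, MatAccess P j k → MatAccess P k j := by
    intro k hk
    have hik : MatAccess P i k := hij.trans hk
    have hcard : (R j).card ≤ (R k).card := hjmin k (by simp [hik])
    have hsub : R k ⊆ R j := by
      intro l hl
      simp only [hR, Finset.mem_filter, Finset.mem_univ, true_and] at hl ⊢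
      exact hk.trans hl
    have heq : R k = R j := Finset.eq_of_subset_of_card_le hsub hcard
    have hj_self : j ∈ R j := by
      simp only [hR, Finset.mem_filter, Finset.mem_univ, true_and]
      exact Relation.ReflTransGen.refl
    rw [← heq] at hj_self
    simpa [hR] using hj_self
  refine ⟨j, hij, {k | MatAccess P j k ∧ MatAccess P k j}, ⟨⟨j, rfl⟩, ?_⟩,
    Relation.ReflTransGen.refl, Relation.ReflTransGen.refl⟩
  intro a ha l hal
  have hjl : MatAccess P j l := ha.1.trans hal
  exact ⟨hjl, back l hjl⟩

/-- Discrete maximum principle: if `P` is stochastic and `Pv ≤ v`,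
then `v` is constant on each final class of `P`, `Pv = v` on the union of the final
classes, and the minimum of `v` is attained on a final class. -/
theorem stmt4 (n : ℕ) (hn : 1 ≤ n) (P : Matrix (Fin n) (Fin n) ℝ)
    (hP : IsStochMat P) (v : Fin n → ℝ) (hv : ∀ i, P.mulVec v i ≤ v i) :
    (∀ C, IsFinalClass P C → ∀ i ∈ C, ∀ j ∈ C, v i = v j) ∧
    (∀ i ∈ finalNodes P, P.mulVec v i = v i) ∧
    (∃ i ∈ finalNodes P, ∀ j, v i ≤ v j) := by
  classical
  have part1 : ∀ C, IsFinalClass P C → ∀ i ∈ C, ∀ j ∈ C, v i = v j := by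
    intro C hF
    obtain ⟨i₀, hC0⟩ := hF.1
    have hi₀ : i₀ ∈ C := by
      rw [hC0]; exact ⟨Relation.ReflTransGen.refl, Relation.ReflTransGen.refl⟩
    have arcClosed : ∀ a ∈ C, ∀ b, P a b ≠ 0 → b ∈ C :=
      fun a ha b h => hF.2 a ha b (Relation.ReflTransGen.single h)
    have accessWithin : ∀ a ∈ C, ∀ b ∈ C, MatAccess P a b := by
      intro a ha b hb
      rw [hC0] at ha hb
      exact ha.2.trans hb.1
    obtain ⟨im, himF, himmin⟩ :=
      Finset.exists_min_image (Finset.univ.filter (· ∈ C)) v ⟨i₀, by simp [hi₀]⟩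
    have himC : im ∈ C := (Finset.mem_filter.mp himF).2
    have hm : ∀ j ∈ C, v im ≤ v j := fun j hj => himmin j (by simp [hj])
    have hconst : ∀ j ∈ C, v j = v im := by
      intro j hj
      exact (key_access hP hv arcClosed hm himC rfl j (accessWithin im himC j hj)).2
    intro i hi j hj
    rw [hconst i hi, hconst j hj]
  refine ⟨part1, ?_, ?_⟩
  · intro i hi
    obtain ⟨C, hF, hiC⟩ := hi
    have hterm : ∀ j, P i j * v j = P i j * v i := by
      intro j
      rcases eq_or_ne (P i j) 0 with h | h
      · simp [h]
      · have hjC : j ∈ C := hF.2 i hiC j (Relation.ReflTransGen.single h)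
        rw [part1 C hF j hjC i hiC]
    have : P.mulVec v i = ∑ j, P i j * v j := by
      simp [Matrix.mulVec, dotProduct]
    rw [this, Finset.sum_congr rfl (fun j _ => hterm j), ← Finset.sum_mul,
      (hP i).2, one_mul]
  · obtain ⟨i₀, -, hmin⟩ :=
      Finset.exists_min_image Finset.univ v
        ⟨⟨0, hn⟩, Finset.mem_univ _⟩
    obtain ⟨j, hij, hjf⟩ := exists_access_final P i₀
    have hm : ∀ k ∈ (Set.univ : Set (Fin n)), v i₀ ≤ v k :=
      fun k _ => hmin k (Finset.mem_univ k)
    have hj : v j = v i₀ :=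
      (key_access hP hv (fun _ _ _ _ => Set.mem_univ _) hm (Set.mem_univ i₀) rfl
        j hij).2
    exact ⟨j, hjf, fun k => hj ▸ hmin k (Finset.mem_univ k)⟩
end

section
/- (Spectral projector) Let f : ℝ^n → ℝ^n be convex, monotone, additively homogeneous, with eigenvalue 0 (i.e. f has a fixed point). If z ∈ ℝ^n satisfies f(z) ≤ z, then the sequence f^k(z) converges as k → ∞; its limit f^ω(z) is a fixed point of f, and f^ω(z)_i = z_i for every critical node i ∈ N^c(f). Moreover, on the super-eigenspace E^+(f) = {x ∈ ℝ^n : f(x) ≤ x}, the map f^ω is monotone, additively homogeneous, convex, maps E^+(f) onto the fixed point set E(f) = {x : f(x) = x}, and satisfies f^ω ∘ f^ω = f^ω. -/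
open Matrix Filter

/-- Spectral projector: for a convex monotone additively homogeneous map
with a fixed point, iterates of any super-fixed point converge to a fixed point which
agrees with it on the critical nodes, and the limit map `f^ω` is a monotone,
additively homogeneous, convex, idempotent projector from `E⁺(f)` onto `E(f)`. -/
theorem stmt6 (n : ℕ) (hn : 1 ≤ n) (f : (Fin n → ℝ) → (Fin n → ℝ))
    (hconv : IsConvexMap f) (hmon : Monotone f) (hhom : AddHomog f)
    (w : Fin n → ℝ) (hw : f w = w) :
    ∃ fω : (Fin n → ℝ) → (Fin n → ℝ),
      (∀ z, f z ≤ z → Filter.Tendsto (fun k => f^[k] z) Filter.atTop (nhds (fω z))) ∧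
      (∀ z, f z ≤ z → f (fω z) = fω z) ∧
      (∀ z, f z ≤ z → ∀ i ∈ finalNodesSet (Subdiff f w), fω z i = z i) ∧
      (∀ x y, f x ≤ x → f y ≤ y → x ≤ y → fω x ≤ fω y) ∧
      (∀ (c : ℝ) (z : Fin n → ℝ), f z ≤ z → fω (fun i => c + z i) = fun i => c + fω z i) ∧
      (∀ i, ConvexOn ℝ {x : Fin n → ℝ | f x ≤ x} (fun x => fω x i)) ∧
      fω '' {x : Fin n → ℝ | f x ≤ x} = {x : Fin n → ℝ | f x = x} ∧
      (∀ z, f z ≤ z → fω (fω z) = fω z) := by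
  classical
  set fω : (Fin n → ℝ) → (Fin n → ℝ) := fun z i => ⨅ k, f^[k] z i with hfω
  -- basic monotonicity of iterates
  have hdec : ∀ z, f z ≤ z → ∀ k, f^[k + 1] z ≤ f^[k] z := by
    intro z hz k
    induction k with
    | zero => simpa using hz
    | succ k ih =>
      simpa [Function.iterate_succ_apply'] using hmon ih
  have hanti : ∀ z, f z ≤ z → ∀ i, Antitone fun k => f^[k] z i :=
    fun z hz i => antitone_nat_of_succ_le fun k => hdec z hz k i
  -- lower bound for iterates
  have hlb : ∀ z, f z ≤ z → ∀ k i, w i - ‖w - z‖ ≤ f^[k] z i := by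
    intro z hz k
    induction k with
    | zero =>
      intro i
      have h1 := norm_le_pi_norm (w - z) i
      have h2 := le_abs_self (w i - z i)
      simp only [Pi.sub_apply, Real.norm_eq_abs] at h1
      simp only [Function.iterate_zero_apply]
      linarith
    | succ k ih =>
      intro i
      rw [Function.iterate_succ_apply']
      have h1 : (fun j => -‖w - z‖ + w j) ≤ f^[k] z := fun j => by
        have := ih j
        show -‖w - z‖ + w j ≤ f^[k] z j
        linarith
      have h2 := hmon h1 i
      rw [hhom (-‖w - z‖) w, hw] at h2
      have h2' : -‖w - z‖ + w i ≤ f (f^[k] z) i := h2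
      linarith
  have hbdd : ∀ z, f z ≤ z → ∀ i, BddBelow (Set.range fun k => f^[k] z i) := by
    intro z hz i
    exact ⟨w i - ‖w - z‖, by rintro _ ⟨k, rfl⟩; exact hlb z hz k i⟩
  -- convergence
  have hconvg : ∀ z, f z ≤ z → Tendsto (fun k => f^[k] z) atTop (nhds (fω z)) := by
    intro z hz
    rw [tendsto_pi_nhds]
    intro i
    exact tendsto_atTop_ciInf (hanti z hz i) (hbdd z hz i)
  -- continuity of f
  have hcont : Continuous f := by
    have hsub : ∀ x y : Fin n → ℝ, ∀ i, f x i - f y i ≤ dist x y := by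
      intro x y i
      have hx : x ≤ fun j => dist x y + y j := fun j => by
        have h1 := dist_le_pi_dist x y j
        rw [Real.dist_eq] at h1
        have := le_abs_self (x j - y j)
        show x j ≤ dist x y + y j
        linarith
      have h2 := hmon hx i
      rw [hhom (dist x y) y] at h2
      have h2' : f x i ≤ dist x y + f y i := h2
      linarith
    have hl : LipschitzWith 1 f := by
      apply LipschitzWith.of_dist_le_mul
      intro x y
      rw [NNReal.coe_one, one_mul, dist_pi_le_iff dist_nonneg]
      intro i
      rw [Real.dist_eq, abs_sub_le_iff]
      exact ⟨hsub x y i, by have := hsub y x i; rwa [dist_comm] at this⟩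
    exact hl.continuous
  -- fixed point of the limit
  have hfix : ∀ z, f z ≤ z → f (fω z) = fω z := by
    intro z hz
    have h1 : Tendsto (fun k => f^[k + 1] z) atTop (nhds (f (fω z))) := by
      have := (hcont.tendsto (fω z)).comp (hconvg z hz)
      simpa [Function.comp_def, Function.iterate_succ_apply'] using this
    have h2 : Tendsto (fun k => f^[k + 1] z) atTop (nhds (fω z)) :=
      (hconvg z hz).comp (Filter.tendsto_add_atTop_nat 1)
    exact tendsto_nhds_unique h1 h2
  -- fω is the identity on fixed points
  have hfωfix : ∀ x, f x = x → fω x = x := by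
    intro x hx
    funext i
    simp [hfω, Function.iterate_fixed hx]
  -- critical nodes
  have hcrit : ∀ z, f z ≤ z → ∀ i, i ∈ finalNodesSet (Subdiff f w) → fω z i = z i := by
    intro z hz i hi
    obtain ⟨P, hP, C, hC, hiC⟩ : ∃ P ∈ Subdiff f w, ∃ C, IsFinalClass P C ∧ i ∈ C := hi
    have hPle : ∀ x j, P.mulVec (x - w) j ≤ f x j - w j := by
      intro x j; have := hP x j; rwa [hw] at this
    have Pnn : ∀ a b, 0 ≤ P a b := by
      intro a b
      set x : Fin n → ℝ := fun k => w k - if k = b then 1 else 0 with hxdef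
      have hxw : x ≤ w := by
        intro k
        simp only [hxdef]
        have : (0:ℝ) ≤ if k = b then 1 else 0 := by positivity
        linarith
      have h1 := hPle x a
      have h2 : P.mulVec (x - w) a = -P a b := by
        simp [Matrix.mulVec, dotProduct, hxdef, mul_ite, Finset.sum_ite_eq']
      have h3 : f x a ≤ w a := by
        have := hmon hxw a; rwa [hw] at this
      rw [h2] at h1
      linarith
    have Prow : ∀ a, ∑ b, P a b = 1 := by
      intro a
      have key : ∀ t : ℝ, (∑ b, P a b) * t ≤ t := by
        intro t
        have h1 := hPle (fun k => t + w k) a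
        have h2 : f (fun k => t + w k) a = t + w a := by
          rw [hhom t w, hw]
        have h3 : P.mulVec ((fun k => t + w k) - w) a = (∑ b, P a b) * t := by
          simp only [Matrix.mulVec, dotProduct, Pi.sub_apply, add_sub_cancel_right,
            Finset.sum_mul]
        rw [h3, h2] at h1
        linarith
      have k1 := key 1
      have k2 := key (-1)
      linarith
    have hsupp : ∀ a ∈ C, ∀ b, P a b ≠ 0 → b ∈ C :=
      fun a ha b hb => hC.2 a ha b (Relation.ReflTransGen.single hb)
    set v : Fin n → ℝ := z - w with hvdef
    have hPv : ∀ j, P.mulVec v j ≤ v j := by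
      intro j
      have h1 := hPle z j
      have h2 := hz j
      simp only [hvdef, Pi.sub_apply]
      linarith
    have hCne : C.Nonempty := ⟨i, hiC⟩
    have hvap : ∀ j, v j = z j - w j := fun j => rfl
    obtain ⟨j0, hj0C, hj0min⟩ := Set.exists_min_image C v (Set.toFinite C) hCne
    have hclosed : ∀ a, a ∈ C → v a = v j0 → ∀ b, P a b ≠ 0 → b ∈ C ∧ v b = v j0 := by
      intro a haC hva b hab
      have hbC : b ∈ C := hsupp a haC b hab
      refine ⟨hbC, ?_⟩
      by_contra hne
      have hlt : v j0 < v b := lt_of_le_of_ne (hj0min b hbC) fun h => hne h.symm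
      have hsum : ∑ c, P a c * v j0 < ∑ c, P a c * v c := by
        apply Finset.sum_lt_sum
        · intro c _
          by_cases hc : P a c = 0
          · simp [hc]
          · exact mul_le_mul_of_nonneg_left (hj0min c (hsupp a haC c hc)) (Pnn a c)
        · refine ⟨b, Finset.mem_univ b, ?_⟩
          exact mul_lt_mul_of_pos_left hlt (lt_of_le_of_ne (Pnn a b) (Ne.symm hab))
      have hmv : P.mulVec v a = ∑ c, P a c * v c := by
        simp [Matrix.mulVec, dotProduct]
      have hconstsum : ∑ c, P a c * v j0 = v j0 := by
        rw [← Finset.sum_mul, Prow a, one_mul]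
      have := hPv a
      rw [hmv] at this
      rw [hconstsum] at hsum
      linarith [hva ▸ this]
    have hreach : ∀ j, MatAccess P j0 j → j ∈ C ∧ v j = v j0 := by
      intro j hj
      induction hj with
      | refl => exact ⟨hj0C, rfl⟩
      | tail h harc ih => exact hclosed _ ih.1 ih.2 _ harc
    obtain ⟨i0, hCeq⟩ := hC.1
    have hconst : ∀ j ∈ C, v j = v j0 := by
      intro j hjC
      have h1 : MatAccess P j0 i0 := by
        have := hCeq ▸ hj0C; exact this.2
      have h2 : MatAccess P i0 j := by
        have := hCeq ▸ hjC; exact this.1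
      exact (hreach j (h1.trans h2)).2
    have hkey : ∀ k, ∀ j ∈ C, z j ≤ f^[k] z j := by
      intro k
      induction k with
      | zero => intro j _; simp
      | succ k ih =>
        intro j hjC
        rw [Function.iterate_succ_apply']
        have h1 : P.mulVec (f^[k] z - w) j ≤ f (f^[k] z) j - w j := hPle (f^[k] z) j
        have h2 : ∀ b, P j b * v j0 ≤ P j b * (f^[k] z b - w b) := by
          intro b
          by_cases hb : P j b = 0
          · simp [hb]
          · have hbC := hsupp j hjC b hb
            have h3 := ih b hbC
            have h4 := hconst b hbC
            rw [hvap b, hvap j0] at h4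
            refine mul_le_mul_of_nonneg_left ?_ (Pnn j b)
            rw [hvap j0]
            linarith
        have h5 : v j0 ≤ P.mulVec (f^[k] z - w) j := by
          have hmv : P.mulVec (f^[k] z - w) j = ∑ b, P j b * (f^[k] z b - w b) := by
            simp [Matrix.mulVec, dotProduct]
          rw [hmv]
          calc v j0 = ∑ b, P j b * v j0 := by rw [← Finset.sum_mul, Prow j, one_mul]
            _ ≤ _ := Finset.sum_le_sum fun b _ => h2 b
        have h6 := hconst j hjC
        rw [hvap j, hvap j0] at h6
        rw [hvap j0] at h5
        linarith
    have hle : fω z i ≤ z i := by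
      have := ciInf_le (hbdd z hz i) 0
      simpa [hfω] using this
    have hge : z i ≤ fω z i := le_ciInf fun k => hkey k i hiC
    linarith
  -- monotonicity of fω
  have hmono : ∀ x y, f x ≤ x → f y ≤ y → x ≤ y → fω x ≤ fω y := by
    intro x y hx hy hxy i
    exact ciInf_mono (hbdd x hx i) fun k => hmon.iterate k hxy i
  -- additive homogeneity of iterates
  have hiterhom : ∀ (c : ℝ) (z : Fin n → ℝ) (k : ℕ),
      f^[k] (fun i => c + z i) = fun i => c + f^[k] z i := by
    intro c z k
    induction k with
    | zero => rfl
    | succ k ih => rw [Function.iterate_succ_apply', Function.iterate_succ_apply', ih, hhom]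
  have hhomog : ∀ (c : ℝ) (z : Fin n → ℝ), f z ≤ z →
      fω (fun i => c + z i) = fun i => c + fω z i := by
    intro c z hz
    have hmem : f (fun i => c + z i) ≤ fun i => c + z i := by
      intro i
      rw [hhom c z]
      exact add_le_add_right (hz i) c
    have h1 := hconvg _ hmem
    have h2 : Tendsto (fun k => f^[k] fun i => c + z i) atTop
        (nhds fun i => c + fω z i) := by
      rw [tendsto_pi_nhds]
      intro i
      simp only [hiterhom]
      exact tendsto_const_nhds.add (tendsto_pi_nhds.1 (hconvg z hz) i)
    exact tendsto_nhds_unique h1 h2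
  -- convexity
  have hEconvex : Convex ℝ {x : Fin n → ℝ | f x ≤ x} := by
    intro x hx y hy a b ha hb hab
    intro i
    have h1 := (hconv i).2 (Set.mem_univ x) (Set.mem_univ y) ha hb hab
    simp only [smul_eq_mul] at h1
    have h2 : a * f x i ≤ a * x i := mul_le_mul_of_nonneg_left (hx i) ha
    have h3 : b * f y i ≤ b * y i := mul_le_mul_of_nonneg_left (hy i) hb
    simp only [Pi.add_apply, Pi.smul_apply, smul_eq_mul]
    linarith
  have hiterconv : ∀ (k : ℕ) (x y : Fin n → ℝ) (a b : ℝ), 0 ≤ a → 0 ≤ b → a + b = 1 →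
      ∀ i, f^[k] (a • x + b • y) i ≤ a * f^[k] x i + b * f^[k] y i := by
    intro k
    induction k with
    | zero => intro x y a b ha hb hab i; simp
    | succ k ih =>
      intro x y a b ha hb hab i
      rw [Function.iterate_succ_apply', Function.iterate_succ_apply',
        Function.iterate_succ_apply']
      have h1 : f^[k] (a • x + b • y) ≤ a • f^[k] x + b • f^[k] y := by
        intro j
        simpa [smul_eq_mul] using ih x y a b ha hb hab j
      have h2 := hmon h1 i
      have h3 := (hconv i).2 (Set.mem_univ (f^[k] x)) (Set.mem_univ (f^[k] y)) ha hb hab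
      simp only [smul_eq_mul] at h3
      linarith
  have hconvex : ∀ i, ConvexOn ℝ {x : Fin n → ℝ | f x ≤ x} fun x => fω x i := by
    intro i
    refine ⟨hEconvex, ?_⟩
    intro x hx y hy a b ha hb hab
    have hmem : a • x + b • y ∈ {x : Fin n → ℝ | f x ≤ x} := hEconvex hx hy ha hb hab
    have T1 : Tendsto (fun k => f^[k] (a • x + b • y) i) atTop
        (nhds (fω (a • x + b • y) i)) := tendsto_pi_nhds.1 (hconvg _ hmem) i
    have T2 : Tendsto (fun k => a * f^[k] x i + b * f^[k] y i) atTop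
        (nhds (a * fω x i + b * fω y i)) :=
      (tendsto_const_nhds.mul (tendsto_pi_nhds.1 (hconvg x hx) i)).add
        (tendsto_const_nhds.mul (tendsto_pi_nhds.1 (hconvg y hy) i))
    have := le_of_tendsto_of_tendsto' T1 T2 fun k => hiterconv k x y a b ha hb hab i
    simpa [smul_eq_mul] using this
  refine ⟨fω, hconvg, hfix, fun z hz i hi => hcrit z hz i hi, hmono, hhomog, hconvex, ?_, ?_⟩
  · ext x
    constructor
    · rintro ⟨z, hz, rfl⟩
      exact hfix z hz
    · intro hx
      exact ⟨x, le_of_eq hx, hfωfix x hx⟩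
  · intro z hz
    exact hfωfix (fω z) (hfix z hz)
end

section
/- Let f : ℝ^n → ℝ^n be convex, monotone, and additively homogeneous, with an eigenvector, let C_1,…,C_s be the critical classes of f and C = N^c(f) = C_1 ∪ ⋯ ∪ C_s. Then: (1) for any two eigenvectors v, v' of f, the vector v − v' is constant on each C_i; (2) if two eigenvectors v, v' satisfy v_i = v'_i for all i ∈ C, then v = v'; (3) the restriction map r_C : ℝ^n → ℝ^C, x ↦ (x_i)_{i∈C}, maps the eigenspace E(f) bijectively onto its image E^c(f) = r_C(E(f)); E^c(f) is a convex subset of ℝ^C which is closed under componentwise minimum (u, w ∈ E^c(f) implies u ∧ w ∈ E^c(f)), and the inverse bijection E^c(f) → E(f) is monotone and additively homogeneous. -/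
open Matrix Filter

section AkianGaubertAux

open Relation

lemma AG.mulVec_apply' {n m : ℕ} (P : Matrix (Fin m) (Fin n) ℝ) (w : Fin n → ℝ) (i : Fin m) :
    P.mulVec w i = ∑ k, P i k * w k := rfl

lemma AG.subgrad_exists {n : ℕ} (g : (Fin n → ℝ) → ℝ) (hconv : ConvexOn ℝ Set.univ g)
    (hcont : Continuous g) (v : Fin n → ℝ) :
    ∃ p : Fin n → ℝ, ∀ x, ∑ j, p j * (x j - v j) ≤ g x - g v := by
  classical
  set S : Set ((Fin n → ℝ) × ℝ) := {p | g p.1 < p.2} with hS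
  have hSconv : Convex ℝ S := by
    have h := hconv.convex_strict_epigraph
    have : S = {p : (Fin n → ℝ) × ℝ | p.1 ∈ Set.univ ∧ g p.1 < p.2} := by
      ext p; simp [hS]
    rw [this]; exact h
  have hSopen : IsOpen S := isOpen_lt (hcont.comp continuous_fst) continuous_snd
  have hxS : (v, g v) ∉ S := by simp [hS]
  obtain ⟨L, hL⟩ := geometric_hahn_banach_open_point hSconv hSopen hxS
  set β := L (0, 1) with hβdef
  set M : (Fin n → ℝ) →L[ℝ] ℝ := L.comp (ContinuousLinearMap.inl ℝ (Fin n → ℝ) ℝ) with hMdef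
  have hM : ∀ y : Fin n → ℝ, M y = L (y, 0) := fun y => rfl
  have hdec : ∀ (y : Fin n → ℝ) (r : ℝ), L (y, r) = M y + r * β := by
    intro y r
    have : (y, r) = (y, (0:ℝ)) + r • ((0 : Fin n → ℝ), (1:ℝ)) := by
      simp [Prod.ext_iff]
    rw [this, L.map_add, L.map_smul]
    simp [hM, hβdef, smul_eq_mul]
  have hβ : β < 0 := by
    have h1 : L (v, g v + 1) < L (v, g v) := hL _ (by simp [hS])
    rw [hdec, hdec] at h1
    nlinarith
  have key : ∀ y : Fin n → ℝ, M y + g y * β ≤ M v + g v * β := by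
    intro y
    by_contra hcon
    push_neg at hcon
    set ε := (M y + g y * β - (M v + g v * β)) / (-β) / 2 with hε
    have hεpos : 0 < ε := by
      apply div_pos (div_pos (by linarith) (by linarith)) two_pos
    have h2 : L (y, g y + ε) < L (v, g v) := hL _ (by simp [hS]; linarith)
    rw [hdec, hdec] at h2
    have hβne : β ≠ 0 := ne_of_lt hβ
    have : ε * β = -((M y + g y * β - (M v + g v * β)) / 2) := by
      rw [hε]; field_simp
    nlinarith
  set e : Fin n → (Fin n → ℝ) := fun j k => if j = k then 1 else 0 with he
  refine ⟨fun j => M (e j) / (-β), fun x => ?_⟩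
  have hMsum : ∀ y : Fin n → ℝ, ∑ j, y j * M (e j) = M y := by
    intro y
    calc ∑ j, y j * M (e j)
        = ∑ j, M (y j • e j) := by
          refine Finset.sum_congr rfl fun j _ => ?_
          rw [M.map_smul, smul_eq_mul]
      _ = M (∑ j, y j • e j) := (map_sum M (fun j => y j • e j) Finset.univ).symm
      _ = M y := by rw [← pi_eq_sum_univ y]
  have hβpos : (0:ℝ) < -β := by linarith
  have h1 : ∑ j, M (e j) / (-β) * (x j - v j)
      = (M x - M v) / (-β) := by
    have h2 : ∑ j, (x - v) j * M (e j) = M (x - v) := hMsum (x - v)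
    have h3 : M (x - v) = M x - M v := map_sub M x v
    calc ∑ j, M (e j) / (-β) * (x j - v j)
        = (∑ j, (x - v) j * M (e j)) / (-β) := by
          rw [Finset.sum_div]
          refine Finset.sum_congr rfl fun j _ => ?_
          simp [Pi.sub_apply]; ring
      _ = (M x - M v) / (-β) := by rw [h2, h3]
  rw [h1, div_le_iff₀ hβpos]
  have := key x
  nlinarith

lemma AG.coord_continuous {n : ℕ} (f : (Fin n → ℝ) → (Fin n → ℝ))
    (hmon : Monotone f) (hhom : AddHomog f) (i : Fin n) :
    Continuous (fun x => f x i) := by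
  have key : ∀ x y : Fin n → ℝ, f x i - f y i ≤ dist x y := by
    intro x y
    have hxy : x ≤ fun j => dist x y + y j := by
      intro j
      have h1 : dist (x j) (y j) ≤ dist x y := dist_le_pi_dist x y j
      have h2 : x j - y j ≤ dist (x j) (y j) := by
        rw [Real.dist_eq]; exact le_abs_self _
      show x j ≤ dist x y + y j
      linarith
    have := hmon hxy
    rw [hhom (dist x y) y] at this
    have := this i
    simpa using this
  have : LipschitzWith 1 (fun x => f x i) := by
    rw [lipschitzWith_iff_dist_le_mul]
    intro x y
    rw [Real.dist_eq, abs_le]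
    constructor
    · have := key y x
      rw [dist_comm] at this
      simp; linarith
    · have := key x y; simp; linarith
  exact this.continuous

lemma AG.subdiff_stoch {n : ℕ} (f : (Fin n → ℝ) → (Fin n → ℝ))
    (hmon : Monotone f) (hhom : AddHomog f) (v : Fin n → ℝ)
    (P : Matrix (Fin n) (Fin n) ℝ) (hP : P ∈ Subdiff f v) : IsStochMat P := by
  classical
  intro i
  constructor
  · intro j
    have h1 := hP (fun k => v k - if j = k then 1 else 0) i
    have h2 : f (fun k => v k - if j = k then 1 else 0) i ≤ f v i := by
      have : (fun k => v k - if j = k then 1 else 0) ≤ v := by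
        intro k; by_cases h : j = k <;> simp [h]
      exact hmon this i
    rw [AG.mulVec_apply'] at h1
    have h3 : ∑ k, P i k * ((fun k => v k - if j = k then 1 else 0) - v) k = -(P i j) := by
      have : ∀ k, P i k * ((fun k => v k - if j = k then 1 else 0) - v) k
          = -(if j = k then P i k else 0) := by
        intro k; by_cases h : j = k <;> simp [h]
      rw [Finset.sum_congr rfl fun k _ => this k]
      simp
    rw [h3] at h1
    linarith
  · have hc : ∀ c : ℝ, c * ∑ k, P i k ≤ c := by
      intro c
      have h1 := hP (fun k => c + v k) i
      rw [AG.mulVec_apply'] at h1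
      have h2 : f (fun k => c + v k) i = c + f v i := by
        rw [hhom c v]
      have h3 : ∑ k, P i k * ((fun k => c + v k) - v) k = c * ∑ k, P i k := by
        rw [Finset.mul_sum]
        refine Finset.sum_congr rfl fun k _ => ?_
        simp [Pi.sub_apply]; ring
      rw [h3, h2] at h1
      linarith
    have h1 := hc 1
    have h2 := hc (-1)
    simp at h1 h2
    linarith

lemma AG.final_mem_base {n : ℕ} {P : Matrix (Fin n) (Fin n) ℝ} {F : Set (Fin n)}
    (hF : IsFinalClass P F) : F.Nonempty := by
  obtain ⟨⟨i0, hi0⟩, _⟩ := hF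
  exact ⟨i0, by rw [hi0]; exact ⟨Relation.ReflTransGen.refl, Relation.ReflTransGen.refl⟩⟩

lemma AG.final_access {n : ℕ} {P : Matrix (Fin n) (Fin n) ℝ} {F : Set (Fin n)}
    (hF : IsFinalClass P F) {i j : Fin n} (hi : i ∈ F) (hj : j ∈ F) : MatAccess P i j := by
  obtain ⟨⟨i0, hi0⟩, _⟩ := hF
  rw [hi0] at hi hj
  exact hi.2.trans hj.1

/-- A superharmonic vector for a row-stochastic matrix is constant on each final class. -/
lemma AG.superharm_const {n : ℕ} {P : Matrix (Fin n) (Fin n) ℝ}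
    (hst : IsStochMat P) {F : Set (Fin n)}
    (hF : IsFinalClass P F) {w : Fin n → ℝ} (hw : ∀ i, ∑ k, P i k * w k ≤ w i) :
    ∀ i ∈ F, ∀ j ∈ F, w i = w j := by
  obtain ⟨imin, himinF, hmin⟩ :=
    Set.exists_min_image F w (Set.toFinite F) (AG.final_mem_base hF)
  have step : ∀ k, k ∈ F ∧ w k = w imin → ∀ l, P k l ≠ 0 → l ∈ F ∧ w l = w imin := by
    rintro k ⟨hkF, hkw⟩ l hkl
    have hlF : l ∈ F := hF.2 k hkF l (Relation.ReflTransGen.single hkl)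
    refine ⟨hlF, ?_⟩
    have hterm : ∀ m, 0 ≤ P k m * (w m - w imin) := by
      intro m
      rcases eq_or_ne (P k m) 0 with h | h
      · simp [h]
      · have hmF : m ∈ F := hF.2 k hkF m (Relation.ReflTransGen.single h)
        exact mul_nonneg ((hst k).1 m) (by linarith [hmin m hmF])
    have hsum : ∑ m, P k m * (w m - w imin) ≤ 0 := by
      have h1 : ∑ m, P k m * (w m - w imin)
          = (∑ m, P k m * w m) - (∑ m, P k m) * w imin := by
        rw [Finset.sum_mul, ← Finset.sum_sub_distrib]
        refine Finset.sum_congr rfl fun m _ => by ring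
      rw [h1, (hst k).2]
      have := hw k
      linarith
    have hz : ∀ m ∈ Finset.univ, P k m * (w m - w imin) = 0 :=
      (Finset.sum_eq_zero_iff_of_nonneg (fun m _ => hterm m)).mp
        (le_antisymm hsum (Finset.sum_nonneg fun m _ => hterm m))
    have := hz l (Finset.mem_univ l)
    rcases mul_eq_zero.mp this with h | h
    · exact absurd h hkl
    · linarith
  have prop : ∀ j, MatAccess P imin j → j ∈ F ∧ w j = w imin := by
    intro j hj
    induction hj with
    | refl => exact ⟨himinF, rfl⟩
    | tail _ hstep ih => exact step _ ih _ hstep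
  intro i hi j hj
  have hi' := (prop i (AG.final_access hF himinF hi)).2
  have hj' := (prop j (AG.final_access hF himinF hj)).2
  rw [hi', hj']

/-- A nonempty arc-closed set contains a final class. -/
lemma AG.closed_contains_final {n : ℕ} (P : Matrix (Fin n) (Fin n) ℝ) (S : Set (Fin n))
    (hne : S.Nonempty) (hcl : ∀ i ∈ S, ∀ j, P i j ≠ 0 → j ∈ S) :
    ∃ F, IsFinalClass P F ∧ F ⊆ S := by
  have hacc : ∀ i ∈ S, ∀ j, MatAccess P i j → j ∈ S := by
    intro i hi j hj
    induction hj with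
    | refl => exact hi
    | tail _ hstep ih => exact hcl _ ih _ hstep
  have main : ∀ (m : ℕ) (T : Set (Fin n)), T.ncard ≤ m → T.Nonempty →
      (∀ i ∈ T, ∀ j, MatAccess P i j → j ∈ T) →
      ∃ i ∈ T, ∀ j, MatAccess P i j → MatAccess P j i := by
    intro m
    induction m with
    | zero =>
      intro T hcard hTne _
      exfalso
      have := Set.ncard_pos (Set.toFinite T) |>.mpr hTne
      omega
    | succ m ih =>
      intro T hcard hTne hTcl
      obtain ⟨i0, hi0⟩ := hTne
      by_cases h : ∀ j, MatAccess P i0 j → MatAccess P j i0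
      · exact ⟨i0, hi0, h⟩
      · push_neg at h
        obtain ⟨j, hj, hnj⟩ := h
        set T' : Set (Fin n) := T ∩ {k | MatAccess P j k} with hT'
        have hjT : j ∈ T := hTcl i0 hi0 j hj
        have hT'ne : T'.Nonempty := ⟨j, hjT, Relation.ReflTransGen.refl⟩
        have hT'cl : ∀ i ∈ T', ∀ k, MatAccess P i k → k ∈ T' := by
          rintro i ⟨hiT, hij⟩ k hik
          exact ⟨hTcl i hiT k hik, Relation.ReflTransGen.trans hij hik⟩
        have hssub : T' ⊂ T := by
          constructor
          · exact Set.inter_subset_left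
          · intro hsub
            exact hnj ((hsub hi0).2)
        have hcard' : T'.ncard ≤ m := by
          have := Set.ncard_lt_ncard hssub (Set.toFinite T)
          omega
        obtain ⟨i, hiT', hminT⟩ := ih T' hcard' hT'ne hT'cl
        exact ⟨i, hiT'.1, hminT⟩
  obtain ⟨i, hiS, hmin⟩ := main (S.ncard) S le_rfl hne hacc
  refine ⟨{j | MatAccess P i j ∧ MatAccess P j i}, ⟨⟨i, rfl⟩, ?_⟩, ?_⟩
  · rintro k ⟨hik, hki⟩ l hkl
    have hil : MatAccess P i l := hik.trans hkl
    exact ⟨hil, hmin l hil⟩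
  · rintro k ⟨hik, _⟩
    exact hacc i hiS k hik

/-- Difference of two eigenvectors is constant on final classes of subgradients
taken at one of them. -/
lemma AG.eig_diff_const {n : ℕ} (f : (Fin n → ℝ) → (Fin n → ℝ))
    (hmon : Monotone f) (hhom : AddHomog f) (lam : ℝ)
    (z : Fin n → ℝ) (hz : f z = fun i => lam + z i)
    (v : Fin n → ℝ) (hv : f v = fun i => lam + v i)
    (Q : Matrix (Fin n) (Fin n) ℝ) (hQ : Q ∈ Subdiff f z)
    (F : Set (Fin n)) (hF : IsFinalClass Q F) :
    ∀ i ∈ F, ∀ j ∈ F, v i - z i = v j - z j := by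
  have hst := AG.subdiff_stoch f hmon hhom z Q hQ
  have hw : ∀ i, ∑ k, Q i k * (v k - z k) ≤ v i - z i := by
    intro i
    have h1 := hQ v i
    rw [AG.mulVec_apply'] at h1
    have h2 : ∑ k, Q i k * ((v - z) k) = ∑ k, Q i k * (v k - z k) := by
      refine Finset.sum_congr rfl fun k _ => by simp [Pi.sub_apply]
    rw [h2] at h1
    have h3 : f v i - f z i = v i - z i := by
      rw [congrFun hv i, congrFun hz i]; ring
    linarith
  exact AG.superharm_const hst hF hw

/-- Transfer lemma: a final class of a subgradient at one eigenvector contains a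
final class of a subgradient at any other eigenvector. -/
lemma AG.transfer {n : ℕ} (f : (Fin n → ℝ) → (Fin n → ℝ))
    (hconv : IsConvexMap f) (hmon : Monotone f) (hhom : AddHomog f) (lam : ℝ)
    (u : Fin n → ℝ) (hu : f u = fun i => lam + u i)
    (v : Fin n → ℝ) (hv : f v = fun i => lam + v i)
    (P : Matrix (Fin n) (Fin n) ℝ) (hP : P ∈ Subdiff f v)
    (F : Set (Fin n)) (hF : IsFinalClass P F) :
    ∃ Q ∈ Subdiff f u, ∃ F', IsFinalClass Q F' ∧ F' ⊆ F := by
  classical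
  have hstP := AG.subdiff_stoch f hmon hhom v P hP
  have hconst : ∀ i ∈ F, ∀ j ∈ F, u i - v i = u j - v j :=
    AG.eig_diff_const f hmon hhom lam v hv u hu P hP F hF
  have hrow : ∀ i, ∃ p : Fin n → ℝ, ∀ x, ∑ j, p j * (x j - u j) ≤ f x i - f u i :=
    fun i => AG.subgrad_exists _ (hconv i) (AG.coord_continuous f hmon hhom i) u
  choose p hp using hrow
  set Q : Matrix (Fin n) (Fin n) ℝ := fun i j => if i ∈ F then P i j else p i j with hQdef
  have hQmem : Q ∈ Subdiff f u := by
    intro x i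
    rw [AG.mulVec_apply']
    by_cases hiF : i ∈ F
    · have hQP : ∀ k, Q i k = P i k := fun k => by simp [hQdef, hiF]
      have hA : ∑ k, Q i k * ((x - u) k)
          = ∑ k, P i k * (x k - v k) + ∑ k, P i k * (v k - u k) := by
        rw [← Finset.sum_add_distrib]
        refine Finset.sum_congr rfl fun k _ => ?_
        rw [hQP k]; simp [Pi.sub_apply]; ring
      have hB : ∑ k, P i k * (v k - u k) = v i - u i := by
        have hterm : ∀ k, P i k * (v k - u k) = P i k * (v i - u i) := by
          intro k
          rcases eq_or_ne (P i k) 0 with h | h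
          · simp [h]
          · have hkF : k ∈ F := hF.2 i hiF k (Relation.ReflTransGen.single h)
            have := hconst i hiF k hkF
            have : v k - u k = v i - u i := by linarith
            rw [this]
        rw [Finset.sum_congr rfl fun k _ => hterm k, ← Finset.sum_mul, (hstP i).2, one_mul]
      have hC : ∑ k, P i k * (x k - v k) ≤ f x i - f v i := by
        have h1 := hP x i
        rw [AG.mulVec_apply'] at h1
        have h2 : ∑ k, P i k * ((x - v) k) = ∑ k, P i k * (x k - v k) :=
          Finset.sum_congr rfl fun k _ => by simp [Pi.sub_apply]
        linarith [h1, le_of_eq h2.symm]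
      have hD : f v i - f u i = v i - u i := by
        rw [congrFun hv i, congrFun hu i]; ring
      rw [hA]
      linarith
    · have hQp : ∀ k, Q i k = p i k := fun k => by simp [hQdef, hiF]
      have h1 := hp i x
      have h2 : ∑ k, Q i k * ((x - u) k) = ∑ k, p i k * (x k - u k) :=
        Finset.sum_congr rfl fun k _ => by rw [hQp k]; simp [Pi.sub_apply]
      rw [h2]
      exact h1
  have hFcl : ∀ i ∈ F, ∀ j, Q i j ≠ 0 → j ∈ F := by
    intro i hiF j hij
    have : Q i j = P i j := by simp [hQdef, hiF]
    rw [this] at hij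
    exact hF.2 i hiF j (Relation.ReflTransGen.single hij)
  obtain ⟨F', hF', hF'F⟩ := AG.closed_contains_final Q F (AG.final_mem_base hF) hFcl
  exact ⟨Q, hQmem, F', hF', hF'F⟩

/-- Main construction: from a sub-eigenvector whose difference with `u` is constant
on all final classes of subgradients at `u`, produce an eigenvector agreeing with it
on the critical nodes. -/
lemma AG.construct {n : ℕ} [Nonempty (Fin n)] (f : (Fin n → ℝ) → (Fin n → ℝ))
    (hmon : Monotone f) (hhom : AddHomog f) (lam : ℝ)
    (u : Fin n → ℝ) (hu : f u = fun i => lam + u i) (w : Fin n → ℝ)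
    (hsub : ∀ i, f w i ≤ lam + w i)
    (hconst : ∀ Q ∈ Subdiff f u, ∀ F, IsFinalClass Q F →
      ∀ i ∈ F, ∀ j ∈ F, w i - u i = w j - u j) :
    ∃ wb, (f wb = fun i => lam + wb i) ∧ wb ≤ w ∧
      ∀ i ∈ finalNodesSet (Subdiff f u), wb i = w i := by
  classical
  set h : (Fin n → ℝ) → (Fin n → ℝ) := fun x i => f x i - lam with hh
  have hmono_h : ∀ {x y : Fin n → ℝ}, x ≤ y → h x ≤ h y := by
    intro x y hxy i
    have := hmon hxy i
    simp only [hh]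
    linarith
  have hhom_h : ∀ (c : ℝ) (x : Fin n → ℝ), h (fun i => c + x i) = fun i => c + h x i := by
    intro c x
    funext i
    simp only [hh]
    rw [congrFun (hhom c x) i]
    ring
  have hu_h : h u = u := by
    funext i
    simp only [hh]
    rw [congrFun hu i]
    ring
  have hsub_h : h w ≤ w := by
    intro i
    simp only [hh]
    linarith [hsub i]
  set seq : ℕ → (Fin n → ℝ) := fun k => h^[k] w with hseq
  have seq_succ : ∀ k, seq (k + 1) = h (seq k) := by
    intro k
    simp only [hseq]
    rw [Function.iterate_succ_apply']
  have hdecstep : ∀ k, seq (k + 1) ≤ seq k := by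
    intro k
    induction k with
    | zero => rw [seq_succ]; exact hsub_h
    | succ m ih =>
      calc seq (m + 1 + 1) = h (seq (m + 1)) := seq_succ (m + 1)
        _ ≤ h (seq m) := hmono_h ih
        _ = seq (m + 1) := (seq_succ m).symm
  have hanti : Antitone seq := antitone_nat_of_succ_le hdecstep
  -- lower bound
  set c : ℝ := Finset.univ.sup' Finset.univ_nonempty (fun i => u i - w i) with hc
  have hlow0 : ∀ i, u i - c ≤ w i := by
    intro i
    have : u i - w i ≤ c := Finset.le_sup' (fun i => u i - w i) (Finset.mem_univ i)
    linarith
  have hlow : ∀ k i, u i - c ≤ seq k i := by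
    intro k
    induction k with
    | zero => exact hlow0
    | succ m ih =>
      intro i
      have h1 : (fun j => -c + u j) ≤ seq m := by
        intro j
        have := ih j
        show -c + u j ≤ seq m j
        linarith
      have h2 : h (fun j => -c + u j) ≤ h (seq m) := hmono_h h1
      have h3 : h (fun j => -c + u j) = fun j => -c + u j := by
        rw [hhom_h (-c) u, hu_h]
      rw [h3] at h2
      rw [seq_succ]
      have h2i : -c + u i ≤ h (seq m) i := h2 i
      show u i - c ≤ h (seq m) i
      linarith
  set wb : Fin n → ℝ := fun i => ⨅ k, seq k i with hwb
  have hbdd : ∀ i, BddBelow (Set.range fun k => seq k i) := by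
    intro i
    exact ⟨u i - c, by rintro r ⟨k, rfl⟩; exact hlow k i⟩
  have hwb_le : ∀ k i, wb i ≤ seq k i := fun k i => ciInf_le (hbdd i) k
  have hle_wb : ∀ (i) (r : ℝ), (∀ k, r ≤ seq k i) → r ≤ wb i := fun i r hr => le_ciInf hr
  have step1 : h wb ≤ wb := by
    intro i
    apply hle_wb
    intro k
    have h1 : h wb i ≤ h (seq k) i := hmono_h (fun j => hwb_le k j) i
    have h2 : h (seq k) = seq (k + 1) := (seq_succ k).symm
    rw [h2] at h1
    exact h1.trans (hdecstep k i)
  have step2 : wb ≤ h wb := by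
    intro i
    refine le_of_forall_pos_le_add ?_
    intro ε hε
    have hexk : ∀ j, ∃ k, seq k j < wb j + ε := by
      intro j
      have : wb j < wb j + ε := by linarith
      exact exists_lt_of_ciInf_lt this
    choose ks hks using hexk
    set K := Finset.univ.sup ks with hK
    have hseqK : seq K ≤ fun j => ε + wb j := by
      intro j
      have h1 : seq K j ≤ seq (ks j) j :=
        hanti (Finset.le_sup (Finset.mem_univ j)) j
      have h2 := hks j
      show seq K j ≤ ε + wb j
      linarith
    have h3 : h (seq K) ≤ h (fun j => ε + wb j) := hmono_h hseqK
    rw [hhom_h ε wb] at h3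
    have h4 : wb i ≤ seq (K + 1) i := hwb_le (K + 1) i
    rw [seq_succ] at h4
    have h3i : h (seq K) i ≤ ε + h wb i := h3 i
    linarith
  have heig : f wb = fun i => lam + wb i := by
    funext i
    have h1 : h wb i = wb i := le_antisymm (step1 i) (step2 i)
    simp only [hh] at h1
    linarith
  refine ⟨wb, heig, fun i => hwb_le 0 i, ?_⟩
  rintro i ⟨Q, hQ, F, hF, hiF⟩
  have hstQ := AG.subdiff_stoch f hmon hhom u Q hQ
  have claim : ∀ k, ∀ j ∈ F, w j ≤ seq k j := by
    intro k
    induction k with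
    | zero => intro j _; exact le_rfl
    | succ m ih =>
      intro j hj
      have hQx := hQ (seq m) j
      rw [AG.mulVec_apply'] at hQx
      have hterm : ∀ l, Q j l * (w j - u j) ≤ Q j l * ((seq m - u) l) := by
        intro l
        rcases eq_or_ne (Q j l) 0 with hz | hz
        · simp [hz]
        · have hlF : l ∈ F := hF.2 j hj l (Relation.ReflTransGen.single hz)
          have h1 : w l ≤ seq m l := ih l hlF
          have h2 : w l - u l = w j - u j := hconst Q hQ F hF l hlF j hj
          have h3 : (seq m - u) l = seq m l - u l := rfl
          rw [h3]
          apply mul_le_mul_of_nonneg_left _ ((hstQ j).1 l)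
          linarith
      have hsum : w j - u j ≤ ∑ l, Q j l * ((seq m - u) l) := by
        calc w j - u j = ∑ l, Q j l * (w j - u j) := by
              rw [← Finset.sum_mul, (hstQ j).2, one_mul]
          _ ≤ ∑ l, Q j l * ((seq m - u) l) := Finset.sum_le_sum fun l _ => hterm l
      have hfu : f u j = lam + u j := congrFun hu j
      rw [seq_succ]
      show w j ≤ f (seq m) j - lam
      linarith
  have h1 : wb i ≤ w i := hwb_le 0 i
  have h2 : w i ≤ wb i := hle_wb i (w i) fun k => claim k i hiF
  linarith

end AkianGaubertAux


/-- structure of the eigenspace: differences of eigenvectors are constant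
on each critical class, eigenvectors are determined by their values on the critical
nodes, and the restriction to the critical nodes maps the eigenspace bijectively onto a
convex inf-subsemilattice, with monotone additively homogeneous inverse. -/
theorem stmt7 (n : ℕ) (hn : 1 ≤ n) (f : (Fin n → ℝ) → (Fin n → ℝ))
    (hconv : IsConvexMap f) (hmon : Monotone f) (hhom : AddHomog f)
    (u : Fin n → ℝ) (lam : ℝ) (hu : f u = fun i => lam + u i) :
    -- (1) differences of eigenvectors are constant on each critical class
    (∀ v ∈ Eigenspace f lam, ∀ v' ∈ Eigenspace f lam,
      ∀ Ci, IsGraphClass (finalGraphSet (Subdiff f u)) Ci →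
        ∀ i ∈ Ci, ∀ j ∈ Ci, v i - v' i = v j - v' j) ∧
    -- (2) eigenvectors agreeing on the critical nodes coincide
    (∀ v ∈ Eigenspace f lam, ∀ v' ∈ Eigenspace f lam,
      (∀ i ∈ finalNodesSet (Subdiff f u), v i = v' i) → v = v') ∧
    -- (3) the restriction map is injective on the eigenspace, its image is convex and
    -- closed under componentwise minimum, and its inverse is monotone and homogeneous
    Set.InjOn (restrictTo (finalNodesSet (Subdiff f u))) (Eigenspace f lam) ∧
    Convex ℝ (restrictTo (finalNodesSet (Subdiff f u)) '' Eigenspace f lam) ∧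
    (∀ y z, y ∈ restrictTo (finalNodesSet (Subdiff f u)) '' Eigenspace f lam →
      z ∈ restrictTo (finalNodesSet (Subdiff f u)) '' Eigenspace f lam →
      y ⊓ z ∈ restrictTo (finalNodesSet (Subdiff f u)) '' Eigenspace f lam) ∧
    (∀ v ∈ Eigenspace f lam, ∀ v' ∈ Eigenspace f lam,
      restrictTo (finalNodesSet (Subdiff f u)) v ≤
        restrictTo (finalNodesSet (Subdiff f u)) v' → v ≤ v') ∧
    (∀ v ∈ Eigenspace f lam, ∀ c : ℝ, (fun i => c + v i) ∈ Eigenspace f lam ∧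
      restrictTo (finalNodesSet (Subdiff f u)) (fun i => c + v i) =
        fun i => c + restrictTo (finalNodesSet (Subdiff f u)) v i) := by
  classical
  have hne : Nonempty (Fin n) := ⟨⟨0, hn⟩⟩
  have hEv : ∀ v ∈ Eigenspace f lam, f v = fun i => lam + v i := fun v hv => hv
  -- subdifferentials are nonempty
  have subdiff_ne : ∀ v : Fin n → ℝ, ∃ P, P ∈ Subdiff f v := by
    intro v
    have hrow : ∀ i, ∃ p : Fin n → ℝ, ∀ x, ∑ j, p j * (x j - v j) ≤ f x i - f v i :=
      fun i => AG.subgrad_exists _ (hconv i) (AG.coord_continuous f hmon hhom i) v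
    choose p hp using hrow
    refine ⟨Matrix.of p, fun x i => ?_⟩
    rw [AG.mulVec_apply']
    have h2 : ∑ k, (Matrix.of p) i k * ((x - v) k) = ∑ k, p i k * (x k - v k) :=
      Finset.sum_congr rfl fun k _ => by simp [Pi.sub_apply]
    rw [h2]; exact hp i x
  have keyA : ∀ v ∈ Eigenspace f lam, ∀ Q ∈ Subdiff f u, ∀ F, IsFinalClass Q F →
      ∀ i ∈ F, ∀ j ∈ F, v i - u i = v j - u j := fun v hv Q hQ F hF =>
    AG.eig_diff_const f hmon hhom lam u hu v (hEv v hv) Q hQ F hF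
  -- the crux: the inverse of the restriction is monotone
  have crux : ∀ v ∈ Eigenspace f lam, ∀ v' ∈ Eigenspace f lam,
      (∀ i ∈ finalNodesSet (Subdiff f u), v i ≤ v' i) → v ≤ v' := by
    intro v hv v' hv' hCle
    by_contra hcon
    have hex : ∃ i, v' i < v i := by
      by_contra hno; push_neg at hno; exact hcon fun i => hno i
    clear hcon
    obtain ⟨i1, hi1⟩ := hex
    obtain ⟨i0, -, hmax0⟩ := Finset.exists_max_image Finset.univ (fun i => v i - v' i)
      ⟨i1, Finset.mem_univ i1⟩
    have hmax : ∀ a, v a - v' a ≤ v i0 - v' i0 := fun a => hmax0 a (Finset.mem_univ a)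
    have hμ : 0 < v i0 - v' i0 := lt_of_lt_of_le (by linarith) (hmax i1)
    obtain ⟨P, hP⟩ := subdiff_ne v
    have hstP := AG.subdiff_stoch f hmon hhom v P hP
    set M : Set (Fin n) := {i | v i - v' i = v i0 - v' i0} with hM
    have hMcl : ∀ i ∈ M, ∀ j, P i j ≠ 0 → j ∈ M := by
      intro i hiM j hij
      have hiM' : v i - v' i = v i0 - v' i0 := hiM
      have hsubh : v i - v' i ≤ ∑ k, P i k * (v k - v' k) := by
        have h1 := hP v' i
        rw [AG.mulVec_apply'] at h1
        have h2 : ∀ k, P i k * ((v' - v) k) = -(P i k * (v k - v' k)) := fun k => by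
          simp [Pi.sub_apply]; ring
        rw [Finset.sum_congr rfl fun k _ => h2 k, Finset.sum_neg_distrib] at h1
        have h3 : f v' i - f v i = v' i - v i := by
          rw [congrFun (hEv v' hv') i, congrFun (hEv v hv) i]; ring
        linarith
      have hterm : ∀ k, 0 ≤ P i k * ((v i0 - v' i0) - (v k - v' k)) := fun k =>
        mul_nonneg ((hstP i).1 k) (by linarith [hmax k])
      have hsum0 : ∑ k, P i k * ((v i0 - v' i0) - (v k - v' k)) ≤ 0 := by
        have e1 : ∑ k, P i k * ((v i0 - v' i0) - (v k - v' k))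
            = (∑ k, P i k) * (v i0 - v' i0) - ∑ k, P i k * (v k - v' k) := by
          rw [Finset.sum_mul, ← Finset.sum_sub_distrib]
          exact Finset.sum_congr rfl fun k _ => by ring
        rw [e1, (hstP i).2, one_mul]
        linarith
      have hz : ∀ k ∈ Finset.univ, P i k * ((v i0 - v' i0) - (v k - v' k)) = 0 :=
        (Finset.sum_eq_zero_iff_of_nonneg (fun k _ => hterm k)).mp
          (le_antisymm hsum0 (Finset.sum_nonneg fun k _ => hterm k))
      have := hz j (Finset.mem_univ j)
      rcases mul_eq_zero.mp this with h | h
      · exact absurd h hij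
      · show v j - v' j = v i0 - v' i0
        linarith
    obtain ⟨F, hF, hFM⟩ := AG.closed_contains_final P M ⟨i0, rfl⟩ hMcl
    obtain ⟨Q, hQ, F', hF', hF'F⟩ :=
      AG.transfer f hconv hmon hhom lam u hu v (hEv v hv) P hP F hF
    obtain ⟨iF, hiF⟩ := AG.final_mem_base hF'
    have hiC : iF ∈ finalNodesSet (Subdiff f u) := ⟨Q, hQ, F', hF', hiF⟩
    have h1 := hCle iF hiC
    have h2 : v iF - v' iF = v i0 - v' i0 := hFM (hF'F hiF)
    linarith
  have huniq : ∀ v ∈ Eigenspace f lam, ∀ v' ∈ Eigenspace f lam,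
      (∀ i ∈ finalNodesSet (Subdiff f u), v i = v' i) → v = v' := by
    intro v hv v' hv' hag
    exact le_antisymm (crux v hv v' hv' fun i hi => le_of_eq (hag i hi))
      (crux v' hv' v hv fun i hi => ge_of_eq (hag i hi))
  refine ⟨?_, huniq, ?_, ?_, ?_, ?_, ?_⟩
  · -- (1) differences constant on critical classes
    intro v hv v' hv' Ci hCi i hi j hj
    have harc : ∀ a b, finalGraphSet (Subdiff f u) a b → v a - v' a = v b - v' b := by
      rintro a b ⟨Q, hQ, F, hF, haF, hbF, -⟩
      have h1 := keyA v hv Q hQ F hF a haF b hbF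
      have h2 := keyA v' hv' Q hQ F hF a haF b hbF
      linarith
    have hchain : ∀ a b, GAccess (finalGraphSet (Subdiff f u)) a b →
        v a - v' a = v b - v' b := by
      intro a b hab
      induction hab with
      | refl => rfl
      | tail _ hstep ih => rw [ih]; exact harc _ _ hstep
    obtain ⟨⟨i0, hCi0⟩, -⟩ := hCi
    rw [hCi0] at hi hj
    exact hchain i j (Relation.ReflTransGen.trans hi.2 hj.1)
  · -- injectivity on the eigenspace
    intro v hv v' hv' heq
    exact huniq v hv v' hv' fun i hi => congrFun heq ⟨i, hi⟩
  · -- convexity of the image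
    rintro y ⟨v, hv, rfl⟩ z ⟨v', hv', rfl⟩ a b ha hb hab
    set w : Fin n → ℝ := fun i => a * v i + b * v' i with hw
    have hsubw : ∀ i, f w i ≤ lam + w i := by
      intro i
      have h1 := (hconv i).2 (Set.mem_univ v) (Set.mem_univ v') ha hb hab
      have h2 : a • v + b • v' = w := by funext j; simp [hw, smul_eq_mul]
      rw [h2] at h1
      simp only [smul_eq_mul] at h1
      have h3 := congrFun (hEv v hv) i
      have h4 := congrFun (hEv v' hv') i
      rw [h3, h4] at h1
      have h5 : a * (lam + v i) + b * (lam + v' i) = lam + (a * v i + b * v' i) := by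
        linear_combination lam * hab
      show f w i ≤ lam + (a * v i + b * v' i)
      linarith
    have hconstw : ∀ Q ∈ Subdiff f u, ∀ F, IsFinalClass Q F →
        ∀ i ∈ F, ∀ j ∈ F, w i - u i = w j - u j := by
      intro Q hQ F hF i hi j hj
      have h1 := keyA v hv Q hQ F hF i hi j hj
      have h2 := keyA v' hv' Q hQ F hF i hi j hj
      show a * v i + b * v' i - u i = a * v j + b * v' j - u j
      linear_combination a * h1 + b * h2 + (u i - u j) * hab
    obtain ⟨wb, hwb, -, hwbC⟩ := AG.construct f hmon hhom lam u hu w hsubw hconstw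
    refine ⟨wb, hwb, ?_⟩
    funext i
    have h5 : wb i.1 = w i.1 := hwbC i.1 i.2
    show wb i.1 = (a • restrictTo (finalNodesSet (Subdiff f u)) v
      + b • restrictTo (finalNodesSet (Subdiff f u)) v') i
    simp only [Pi.add_apply, Pi.smul_apply, smul_eq_mul]
    rw [h5]
    rfl
  · -- closure under componentwise min
    intro y z hy hz
    obtain ⟨v, hv, rfl⟩ := hy
    obtain ⟨v', hv', rfl⟩ := hz
    set w : Fin n → ℝ := fun i => min (v i) (v' i) with hw
    have hsubw : ∀ i, f w i ≤ lam + w i := by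
      intro i
      have h1 : f w i ≤ f v i := hmon (fun j => min_le_left _ _) i
      have h2 : f w i ≤ f v' i := hmon (fun j => min_le_right _ _) i
      rw [congrFun (hEv v hv) i] at h1
      rw [congrFun (hEv v' hv') i] at h2
      show f w i ≤ lam + min (v i) (v' i)
      rcases min_cases (v i) (v' i) with ⟨hm, -⟩ | ⟨hm, -⟩ <;> rw [hm] <;> linarith
    have hconstw : ∀ Q ∈ Subdiff f u, ∀ F, IsFinalClass Q F →
        ∀ i ∈ F, ∀ j ∈ F, w i - u i = w j - u j := by
      intro Q hQ F hF i hi j hj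
      have h1 := keyA v hv Q hQ F hF i hi j hj
      have h2 := keyA v' hv' Q hQ F hF i hi j hj
      show min (v i) (v' i) - u i = min (v j) (v' j) - u j
      have e1 : v i = v j + (u i - u j) := by linarith
      have e2 : v' i = v' j + (u i - u j) := by linarith
      rw [e1, e2, min_add_add_right]
      ring
    obtain ⟨wb, hwb, -, hwbC⟩ := AG.construct f hmon hhom lam u hu w hsubw hconstw
    refine ⟨wb, hwb, ?_⟩
    funext i
    have h5 : wb i.1 = w i.1 := hwbC i.1 i.2
    show wb i.1 = (restrictTo (finalNodesSet (Subdiff f u)) v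
      ⊓ restrictTo (finalNodesSet (Subdiff f u)) v') i
    simp only [Pi.inf_apply]
    rw [h5]
    show min (v i.1) (v' i.1) = restrictTo (finalNodesSet (Subdiff f u)) v i
      ⊓ restrictTo (finalNodesSet (Subdiff f u)) v' i
    rfl
  · -- monotonicity of the inverse
    intro v hv v' hv' hle
    exact crux v hv v' hv' fun i hi => hle ⟨i, hi⟩
  · -- additive homogeneity
    intro v hv c
    constructor
    · show f (fun i => c + v i) = fun i => lam + (c + v i)
      rw [hhom c v, hEv v hv]
      funext i
      ring
    · rfl
end

section
/- Let f : ℝ^n → ℝ^n be monotone and nonexpansive with respect to some norm on ℝ^n, and suppose f has a fixed point. Then for any fixed points x, y of f, the limits x ∨_f y = lim_{k→∞} f^k(x ∨ y) and x ∧_f y = lim_{k→∞} f^k(x ∧ y) exist (where ∨ and ∧ denote componentwise maximum and minimum); both limits are fixed points of f; x ∧_f y is the greatest fixed point z with z ≤ x and z ≤ y, and x ∨_f y is the least fixed point z with z ≥ x and z ≥ y. In particular the fixed point set of f, equipped with the componentwise order, is a lattice. -/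
open Matrix Filter

open Filter

lemma seminorm_sum_le {E : Type*} [AddCommGroup E] [Module ℝ E] (N : Seminorm ℝ E)
    {ι : Type*} (s : Finset ι) (g : ι → E) : N (∑ i ∈ s, g i) ≤ ∑ i ∈ s, N (g i) := by
  induction s using Finset.cons_induction with
  | empty => simp
  | cons a s ha ih =>
    rw [Finset.sum_cons, Finset.sum_cons]
    exact (map_add_le_add N _ _).trans (by linarith)

lemma seminorm_equiv {n : ℕ} (hn : 1 ≤ n) (N : Seminorm ℝ (Fin n → ℝ))
    (h0 : ∀ x, N x = 0 → x = 0) :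
    ∃ C > 0, (∀ v, N v ≤ C * ‖v‖) ∧ ∀ v, ‖v‖ ≤ C * N v := by
  haveI : Nonempty (Fin n) := ⟨⟨0, hn⟩⟩
  set e : Fin n → Fin n → ℝ := fun i j => if i = j then 1 else 0 with he
  set C1 : ℝ := ∑ i, N (e i) with hC1
  have hC1nn : 0 ≤ C1 := Finset.sum_nonneg fun i _ => apply_nonneg N _
  have hub : ∀ v, N v ≤ C1 * ‖v‖ := by
    intro v
    have h : v = ∑ i, v i • e i := by
      funext j; simp [e, Finset.sum_apply, ite_and]
    calc N v = N (∑ i, v i • e i) := by rw [← h]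
      _ ≤ ∑ i, N (v i • e i) := seminorm_sum_le N _ _
      _ = ∑ i, |v i| * N (e i) := by simp [map_smul_eq_mul, Real.norm_eq_abs]
      _ ≤ ∑ i, ‖v‖ * N (e i) := by
          refine Finset.sum_le_sum fun i _ => ?_
          exact mul_le_mul_of_nonneg_right
            (by simpa using norm_le_pi_norm v i) (apply_nonneg N _)
      _ = C1 * ‖v‖ := by rw [← Finset.mul_sum, hC1, mul_comm]
  -- continuity of N
  have hcont : Continuous fun v => N v := by
    rw [Metric.continuous_iff]
    intro v ε hε
    rcases eq_or_lt_of_le hC1nn with hC | hC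
    · exact ⟨1, one_pos, fun w _ => by
        have h1 := hub (w - v)
        have h2 : |N w - N v| ≤ N (w - v) := by
          simpa using N.norm_sub_map_le_sub w v
        rw [Real.dist_eq]
        rw [← hC] at h1; simp at h1
        linarith⟩
    · refine ⟨ε / C1, by positivity, fun w hw => ?_⟩
      have h1 := hub (w - v)
      have h2 : |N w - N v| ≤ N (w - v) := by
        simpa using N.norm_sub_map_le_sub w v
      rw [Real.dist_eq]
      rw [dist_eq_norm] at hw
      calc |N w - N v| ≤ C1 * ‖w - v‖ := h2.trans h1
        _ < C1 * (ε / C1) := by exact mul_lt_mul_of_pos_left hw hC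
        _ = ε := by field_simp
  -- min of N on unit sphere
  have hsne : (Metric.sphere (0 : Fin n → ℝ) 1).Nonempty :=
    NormedSpace.sphere_nonempty.2 zero_le_one
  obtain ⟨v₀, hv₀s, hv₀min⟩ := (isCompact_sphere (0 : Fin n → ℝ) 1).exists_isMinOn hsne
    hcont.continuousOn
  set ε : ℝ := N v₀ with hεdef
  have hv₀ : ‖v₀‖ = 1 := by simpa using hv₀s
  have hεpos : 0 < ε := by
    rcases (apply_nonneg N v₀).lt_or_eq with h | h
    · exact h
    · exfalso
      have := h0 v₀ h.symm
      rw [this] at hv₀; simp at hv₀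
  have hlb : ∀ v, ‖v‖ ≤ ε⁻¹ * N v := by
    intro v
    rcases eq_or_ne v 0 with rfl | hv
    · simp
    · have hnv : (0:ℝ) < ‖v‖ := norm_pos_iff.2 hv
      have hw : ‖v‖⁻¹ • v ∈ Metric.sphere (0 : Fin n → ℝ) 1 := by
        simp [norm_smul, abs_of_pos (inv_pos.2 hnv), inv_mul_cancel₀ hnv.ne']
      have hmin : ε ≤ N (‖v‖⁻¹ • v) := hv₀min hw
      have hNv : N (‖v‖⁻¹ • v) = ‖v‖⁻¹ * N v := by
        rw [map_smul_eq_mul]; simp [abs_of_pos (inv_pos.2 hnv)]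
      rw [hNv] at hmin
      have h3 : ε * ‖v‖ ≤ N v := by
        calc ε * ‖v‖ ≤ (‖v‖⁻¹ * N v) * ‖v‖ := by nlinarith [apply_nonneg N v]
          _ = N v := by field_simp
      rw [le_inv_mul_iff₀ hεpos]
      linarith
  refine ⟨max C1 ε⁻¹ + 1, by positivity, fun v => ?_, fun v => ?_⟩
  · calc N v ≤ C1 * ‖v‖ := hub v
      _ ≤ (max C1 ε⁻¹ + 1) * ‖v‖ := by
          exact mul_le_mul_of_nonneg_right (by linarith [le_max_left C1 ε⁻¹]) (norm_nonneg v)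
  · calc ‖v‖ ≤ ε⁻¹ * N v := hlb v
      _ ≤ (max C1 ε⁻¹ + 1) * N v := by
          exact mul_le_mul_of_nonneg_right (by linarith [le_max_right C1 ε⁻¹]) (apply_nonneg N v)

lemma aux_sup (n : ℕ) (hn : 1 ≤ n) (f : (Fin n → ℝ) → (Fin n → ℝ))
    (hmon : Monotone f)
    (hne : ∃ N : Seminorm ℝ (Fin n → ℝ), (∀ x, N x = 0 → x = 0) ∧
      ∀ x y, N (f x - f y) ≤ N (x - y))
    (x y : Fin n → ℝ) (hx : f x = x) (hy : f y = y) :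
    ∃ a, Filter.Tendsto (fun k => f^[k] (x ⊔ y)) Filter.atTop (nhds a) ∧
      f a = a ∧ x ≤ a ∧ y ≤ a ∧ ∀ z, f z = z → x ≤ z → y ≤ z → a ≤ z := by
  obtain ⟨N, h0, hnexp⟩ := hne
  obtain ⟨C, hCpos, hNle, hnormle⟩ := seminorm_equiv hn N h0
  set v : ℕ → Fin n → ℝ := fun k => f^[k] (x ⊔ y) with hv
  -- monotonicity in k
  have hstep : x ⊔ y ≤ f (x ⊔ y) := by
    apply sup_le
    · calc x = f x := hx.symm
        _ ≤ f (x ⊔ y) := hmon le_sup_left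
    · calc y = f y := hy.symm
        _ ≤ f (x ⊔ y) := hmon le_sup_right
  have hmono : Monotone v := by
    apply monotone_nat_of_le_succ
    intro k
    rw [hv]
    simp only [Function.iterate_succ_apply]
    exact (hmon.iterate k) hstep
  -- N-bound
  have hNbd : ∀ k, N (v k - x) ≤ N (x ⊔ y - x) := by
    intro k
    induction k with
    | zero => simp [hv]
    | succ k ih =>
      have : v (k + 1) - x = f (v k) - f x := by
        rw [hv]; simp [Function.iterate_succ_apply', hx]
      rw [this]
      exact (hnexp _ _).trans ih
  -- coordinatewise bound
  set B : ℝ := C * N (x ⊔ y - x) with hB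
  have hbd : ∀ k i, v k i ≤ x i + B := by
    intro k i
    have h1 : ‖v k - x‖ ≤ B := (hnormle _).trans
      (by exact mul_le_mul_of_nonneg_left (hNbd k) hCpos.le)
    have h2 : |v k i - x i| ≤ ‖v k - x‖ := by
      simpa using norm_le_pi_norm (v k - x) i
    have := (abs_le.1 (h2.trans h1)).2
    linarith
  -- coordinatewise limits
  have hbdd : ∀ i, BddAbove (Set.range fun k => v k i) := by
    intro i
    exact ⟨x i + B, by rintro t ⟨k, rfl⟩; exact hbd k i⟩
  set a : Fin n → ℝ := fun i => ⨆ k, v k i with ha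
  have hconv : Tendsto v atTop (nhds a) := by
    rw [tendsto_pi_nhds]
    intro i
    exact tendsto_atTop_ciSup (fun j k hjk => hmono hjk i) (hbdd i)
  -- continuity of f
  have hcont : Continuous f := by
    have : LipschitzWith (Real.toNNReal (C * C)) f := by
      apply LipschitzWith.of_dist_le_mul
      intro u w
      rw [dist_eq_norm, dist_eq_norm]
      calc ‖f u - f w‖ ≤ C * N (f u - f w) := hnormle _
        _ ≤ C * N (u - w) := mul_le_mul_of_nonneg_left (hnexp u w) hCpos.le
        _ ≤ C * (C * ‖u - w‖) := mul_le_mul_of_nonneg_left (hNle _) hCpos.le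
        _ = (C * C) * ‖u - w‖ := by ring
        _ = Real.toNNReal (C * C) * ‖u - w‖ := by
            rw [Real.coe_toNNReal _ (by positivity)]
    exact this.continuous
  have hfa : f a = a := by
    have h1 : Tendsto (fun k => v (k + 1)) atTop (nhds a) :=
      hconv.comp (tendsto_add_atTop_nat 1)
    have h2 : (fun k => v (k + 1)) = fun k => f (v k) := by
      funext k; rw [hv]; simp [Function.iterate_succ_apply']
    rw [h2] at h1
    have h3 : Tendsto (fun k => f (v k)) atTop (nhds (f a)) :=
      (hcont.continuousAt.tendsto).comp hconv
    exact tendsto_nhds_unique h3 h1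
  refine ⟨a, hconv, hfa, ?_, ?_, ?_⟩
  · intro i
    calc x i ≤ (x ⊔ y) i := le_sup_left (a := x) (b := y) i
      _ = v 0 i := by simp [hv]
      _ ≤ a i := le_ciSup (hbdd i) 0
  · intro i
    calc y i ≤ (x ⊔ y) i := le_sup_right (a := x) (b := y) i
      _ = v 0 i := by simp [hv]
      _ ≤ a i := le_ciSup (hbdd i) 0
  · intro z hz hxz hyz
    have hvz : ∀ k, v k ≤ z := by
      intro k
      calc v k ≤ f^[k] z := (hmon.iterate k) (sup_le hxz hyz)
        _ = z := Function.iterate_fixed hz k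
    intro i
    exact ciSup_le fun k => hvz k i

/-- the fixed point set of a monotone map, nonexpansive for some norm,
is a lattice: `f^k(x ⊔ y)` and `f^k(x ⊓ y)` converge to the least upper bound and
the greatest lower bound of the fixed points `x, y` in the fixed point set. -/
theorem stmt8 (n : ℕ) (hn : 1 ≤ n) (f : (Fin n → ℝ) → (Fin n → ℝ))
    (hmon : Monotone f)
    (hne : ∃ N : Seminorm ℝ (Fin n → ℝ), (∀ x, N x = 0 → x = 0) ∧
      ∀ x y, N (f x - f y) ≤ N (x - y))
    (hfix : ∃ w, f w = w)
    (x y : Fin n → ℝ) (hx : f x = x) (hy : f y = y) :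
    (∃ a, Filter.Tendsto (fun k => f^[k] (x ⊔ y)) Filter.atTop (nhds a) ∧
      f a = a ∧ x ≤ a ∧ y ≤ a ∧ ∀ z, f z = z → x ≤ z → y ≤ z → a ≤ z) ∧
    (∃ b, Filter.Tendsto (fun k => f^[k] (x ⊓ y)) Filter.atTop (nhds b) ∧
      f b = b ∧ b ≤ x ∧ b ≤ y ∧ ∀ z, f z = z → z ≤ x → z ≤ y → z ≤ b) := by
  
  constructor
  · exact aux_sup n hn f hmon hne x y hx hy
  · -- duality: apply the sup result to g u = -(f (-u))
    set g : (Fin n → ℝ) → (Fin n → ℝ) := fun u => -(f (-u)) with hg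
    have hgmon : Monotone g := by
      intro u w huw
      have : -w ≤ -u := neg_le_neg huw
      exact neg_le_neg (hmon this)
    have hgne : ∃ N : Seminorm ℝ (Fin n → ℝ), (∀ x, N x = 0 → x = 0) ∧
        ∀ x y, N (g x - g y) ≤ N (x - y) := by
      obtain ⟨N, h0, hnexp⟩ := hne
      refine ⟨N, h0, fun u w => ?_⟩
      have h1 : g u - g w = -(f (-u) - f (-w)) := by simp only [hg]; abel
      rw [h1, map_neg_eq_map]
      have h2 : (-w) - (-u) = u - w := by abel
      calc N (f (-u) - f (-w)) = N (f (-w) - f (-u)) := by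
            rw [← map_neg_eq_map]; congr 1; abel
        _ ≤ N ((-w) - (-u)) := hnexp _ _
        _ = N (u - w) := by rw [h2]
    have hgx : g (-x) = -x := by rw [hg]; simp [hx]
    have hgy : g (-y) = -y := by rw [hg]; simp [hy]
    obtain ⟨a, hconv, hga, hxa, hya, hmin⟩ :=
      aux_sup n hn g hgmon hgne (-x) (-y) hgx hgy
    have hiter : ∀ (k : ℕ) (u : Fin n → ℝ), g^[k] u = -(f^[k] (-u)) := by
      intro k
      induction k with
      | zero => intro u; simp
      | succ k ih =>
        intro u
        rw [Function.iterate_succ_apply', Function.iterate_succ_apply', ih, hg]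
        simp
    have hsupinf : (-x) ⊔ (-y) = -(x ⊓ y) := (neg_inf x y).symm
    refine ⟨-a, ?_, ?_, ?_, ?_, ?_⟩
    · have h1 : Tendsto (fun k => -(g^[k] ((-x) ⊔ (-y)))) atTop (nhds (-a)) :=
        hconv.neg
      have h2 : (fun k => -(g^[k] ((-x) ⊔ (-y)))) = fun k => f^[k] (x ⊓ y) := by
        funext k
        rw [hsupinf, hiter]
        simp
      rwa [h2] at h1
    · have h1 : -(f (-a)) = a := by
        have := hga
        simpa only [hg] using this
      have h2 := congrArg (fun t => -t) h1
      simpa using h2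
    · intro i
      have := hxa i
      simp only [Pi.neg_apply] at this ⊢
      linarith
    · intro i
      have := hya i
      simp only [Pi.neg_apply] at this ⊢
      linarith
    · intro z hz hzx hzy
      have hgz : g (-z) = -z := by rw [hg]; simp [hz]
      have h1 : a ≤ -z := hmin (-z) hgz (neg_le_neg hzx) (neg_le_neg hzy)
      intro i
      have := h1 i
      simp only [Pi.neg_apply] at this ⊢
      linarith
end
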